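/- arXiv:1810.12562 — 16 statements merged into one kernel-verified Lean document; each statement's English description precedes it below -/
import Mathlib

section
/- Let K be a field that is not algebraically closed, let X be a nonempty set, and let A be a subring of the ring of all functions X → K (with pointwise operations) such that A contains all constant functions and every f ∈ A with no zero on X is invertible in A. Then for all f₁, …, fₙ, g ∈ A the following are equivalent: (1) Z(f₁) ∩ … ∩ Z(fₙ) ⊆ Z(g); (2) g lies in the Jacobson radical of the ideal of A generated by f₁, …, fₙ; (3) for every h ∈ A, the image of 1 + h·g in the quotient ring A/(f₁, …, fₙ) is a unit. -/
open Polynomial Finset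

private lemma keyK {K : Type*} [Field K] (p : K[X]) (hm : p.Monic) (hd : p.natDegree ≠ 0)
    (hroot : ∀ x : K, p.eval x ≠ 0) (α β : K) :
    (∑ i ∈ range (p.natDegree + 1), p.coeff i * α ^ i * β ^ (p.natDegree - i)) = 0
      ↔ α = 0 ∧ β = 0 := by
  rcases eq_or_ne β 0 with hβ | hβ
  · subst hβ
    rw [Finset.sum_eq_single p.natDegree]
    · simp [hm.coeff_natDegree, pow_eq_zero_iff hd]
    · intro i hi hne
      have : p.natDegree - i ≠ 0 := by
        have := Finset.mem_range.mp hi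
        omega
      simp [zero_pow this]
    · intro h; exact absurd (Finset.self_mem_range_succ _) h
  · have key : (∑ i ∈ range (p.natDegree + 1), p.coeff i * α ^ i * β ^ (p.natDegree - i))
        = β ^ p.natDegree * p.eval (α / β) := by
      rw [eval_eq_sum_range, Finset.mul_sum]
      refine Finset.sum_congr rfl fun i hi => ?_
      have hi' : i ≤ p.natDegree := Nat.lt_succ_iff.mp (Finset.mem_range.mp hi)
      rw [div_pow, pow_sub₀ _ hβ hi']
      field_simp
    rw [key]
    simp only [hβ, and_false, iff_false]
    exact mul_ne_zero (pow_ne_zero _ hβ) (hroot _)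

section Phi

variable {K : Type*} [Field K] {X : Type*} (A : Subring (X → K))
  (hconst : ∀ c : K, (fun _ : X => c) ∈ A) (p : K[X])

private def phi (a b : A) : A :=
  ∑ i ∈ range (p.natDegree + 1),
    (⟨fun _ => p.coeff i, hconst _⟩ : A) * a ^ i * b ^ (p.natDegree - i)

set_option synthInstance.maxHeartbeats 1000000 in
private lemma phi_apply (a b : A) (x : X) :
    ((phi A hconst p a b : A) : X → K) x
      = ∑ i ∈ range (p.natDegree + 1),
          p.coeff i * ((a : X → K) x) ^ i * ((b : X → K) x) ^ (p.natDegree - i) := by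
  let ev : A →+* K := (Pi.evalRingHom (fun _ : X => K) x).comp A.subtype
  have hev : ∀ q : A, (q : X → K) x = ev q := fun q => rfl
  rw [hev, phi, map_sum]
  refine Finset.sum_congr rfl fun i _ => ?_
  simp only [map_mul, map_pow]
  rfl

private lemma phi_mem {I : Ideal A} (hd : p.natDegree ≠ 0) {a b : A}
    (ha : a ∈ I) (hb : b ∈ I) : phi A hconst p a b ∈ I := by
  refine Ideal.sum_mem _ fun i hi => ?_
  rcases Nat.eq_zero_or_pos i with h0 | h0
  · subst h0
    exact Ideal.mul_mem_left _ _ (Ideal.pow_mem_of_mem _ hb _ (by omega))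
  · exact Ideal.mul_mem_right _ _ (Ideal.mul_mem_left _ _ (Ideal.pow_mem_of_mem _ ha _ h0))

private lemma phi_mk {I : Ideal A} (hm : p.Monic) {a b : A} (hb : b ∈ I) :
    Ideal.Quotient.mk I (phi A hconst p a b) = (Ideal.Quotient.mk I a) ^ p.natDegree := by
  rw [← map_pow, Ideal.Quotient.mk_eq_mk_iff_sub_mem]
  have : phi A hconst p a b - a ^ p.natDegree
      = ∑ i ∈ range p.natDegree,
          (⟨fun _ => p.coeff i, hconst _⟩ : A) * a ^ i * b ^ (p.natDegree - i) := by
    rw [phi, Finset.sum_range_succ, Nat.sub_self, pow_zero, mul_one]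
    have : (⟨fun _ => p.coeff p.natDegree, hconst _⟩ : A) = 1 := by
      ext x
      simp [hm.coeff_natDegree]
    rw [this, one_mul]
    ring
  rw [this]
  refine Ideal.sum_mem _ fun i hi => ?_
  have : p.natDegree - i ≠ 0 := by have := Finset.mem_range.mp hi; omega
  exact Ideal.mul_mem_left _ _ (Ideal.pow_mem_of_mem _ hb _ (by omega))

end Phi

private lemma exists_F {K : Type*} [Field K] {X : Type*} (A : Subring (X → K))
    (hconst : ∀ c : K, (fun _ : X => c) ∈ A) (p : K[X]) (hm : p.Monic)
    (hd : p.natDegree ≠ 0) (hroot : ∀ x : K, p.eval x ≠ 0) :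
    ∀ (m : ℕ) (f : Fin m → A), ∃ F : A, F ∈ Ideal.span (Set.range f) ∧
      ∀ x : X, ((F : X → K) x = 0 ↔ ∀ i, (f i : X → K) x = 0) := by
  intro m
  induction m with
  | zero =>
    intro f
    exact ⟨0, Ideal.zero_mem _, fun x => by simp⟩
  | succ m ih =>
    intro f
    obtain ⟨F₀, hF₀mem, hF₀⟩ := ih (f ∘ Fin.succ)
    refine ⟨phi A hconst p (f 0) F₀, ?_, ?_⟩
    · refine phi_mem A hconst p hd ?_ ?_
      · exact Ideal.subset_span ⟨0, rfl⟩
      · refine Ideal.span_mono ?_ hF₀mem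
        rintro _ ⟨i, rfl⟩; exact ⟨i.succ, rfl⟩
    · intro x
      rw [phi_apply, keyK p hm hd hroot, Fin.forall_fin_succ]
      simp [hF₀ x, Function.comp]

set_option maxHeartbeats 1000000 in
set_option synthInstance.maxHeartbeats 1000000 in
theorem stmt_0 {K : Type*} [Field K] (hK : ¬ IsAlgClosed K)
    {X : Type*} [Nonempty X] (A : Subring (X → K))
    (hconst : ∀ c : K, (fun _ : X => c) ∈ A)
    (hunit : ∀ f : A, (∀ x : X, (f : X → K) x ≠ 0) → IsUnit f)
    (n : ℕ) (f : Fin n → A) (g : A) :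
    ((⋂ i, {x : X | (f i : X → K) x = 0}) ⊆ {x : X | (g : X → K) x = 0}
        ↔ g ∈ (Ideal.span (Set.range f)).jacobson)
      ∧ (g ∈ (Ideal.span (Set.range f)).jacobson
        ↔ ∀ h : A, IsUnit (Ideal.Quotient.mk (Ideal.span (Set.range f)) (1 + h * g))) := by
  classical
  obtain ⟨p, hm, hirr, hroot⟩ : ∃ p : K[X], p.Monic ∧ Irreducible p ∧ ∀ x : K, p.eval x ≠ 0 := by
    by_contra hcon
    push_neg at hcon
    exact hK (IsAlgClosed.of_exists_root K fun p hmp hip => hcon p hmp hip)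
  have hd : p.natDegree ≠ 0 :=
    Nat.pos_iff_ne_zero.mp (hm.natDegree_pos.mpr hirr.ne_one)
  set I := Ideal.span (Set.range f) with hI
  have hIzero : ∀ x : X, (∀ i, (f i : X → K) x = 0) → ∀ q ∈ I, (q : X → K) x = 0 := by
    intro x hx q hq
    have hle : I ≤ RingHom.ker ((Pi.evalRingHom (fun _ : X => K) x).comp A.subtype) := by
      rw [hI, Ideal.span_le]
      rintro _ ⟨i, rfl⟩
      exact hx i
    exact RingHom.mem_ker .. |>.mp (hle hq)
  obtain ⟨F, hFmem, hF⟩ := exists_F A hconst p hm hd hroot n f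
  have h13 : (⋂ i, {x : X | (f i : X → K) x = 0}) ⊆ {x : X | (g : X → K) x = 0} →
      ∀ h : A, IsUnit (Ideal.Quotient.mk I (1 + h * g)) := by
    intro hsub h
    have hw : ∀ x : X, ((phi A hconst p (1 + h * g) F : A) : X → K) x ≠ 0 := by
      intro x hx
      rw [phi_apply, keyK p hm hd hroot] at hx
      obtain ⟨h1, h2⟩ := hx
      have hz : ∀ i, (f i : X → K) x = 0 := (hF x).mp h2
      have hgx : (g : X → K) x = 0 := hsub (Set.mem_iInter.mpr fun i => hz i)
      have h1' : 1 + (h : X → K) x * (g : X → K) x = 0 := h1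
      rw [hgx, mul_zero, add_zero] at h1'
      exact one_ne_zero h1'
    have hmk := (hunit _ hw).map (Ideal.Quotient.mk I)
    rw [phi_mk A hconst p hm hFmem] at hmk
    exact (isUnit_pow_iff hd).mp hmk
  have h31 : (∀ h : A, IsUnit (Ideal.Quotient.mk I (1 + h * g))) →
      (⋂ i, {x : X | (f i : X → K) x = 0}) ⊆ {x : X | (g : X → K) x = 0} := by
    intro hall x hx
    simp only [Set.mem_iInter, Set.mem_setOf_eq] at hx ⊢
    by_contra hg
    obtain ⟨u, hu⟩ := hall ⟨fun _ => -((g : X → K) x)⁻¹, hconst _⟩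
    obtain ⟨z, hz⟩ := Ideal.Quotient.mk_surjective (↑u⁻¹ : A ⧸ I)
    have hone : Ideal.Quotient.mk I
        ((1 + (⟨fun _ => -((g : X → K) x)⁻¹, hconst _⟩ : A) * g) * z) = 1 := by
      rw [map_mul, hz, ← hu]
      exact u.mul_inv
    rw [← map_one (Ideal.Quotient.mk I), Ideal.Quotient.mk_eq_mk_iff_sub_mem] at hone
    have h0 := hIzero x hx _ hone
    have h0' : (1 + -((g : X → K) x)⁻¹ * (g : X → K) x) * (z : X → K) x - 1 = 0 := h0
    rw [neg_mul, inv_mul_cancel₀ hg] at h0'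
    simp at h0'
  have h23 : g ∈ I.jacobson ↔ ∀ h : A, IsUnit (Ideal.Quotient.mk I (1 + h * g)) := by
    rw [Ideal.mem_jacobson_iff]
    constructor
    · intro hj h
      obtain ⟨z, hz⟩ := hj h
      refine IsUnit.of_mul_eq_one (Ideal.Quotient.mk I z) ?_
      rw [← map_mul, ← map_one (Ideal.Quotient.mk I), Ideal.Quotient.mk_eq_mk_iff_sub_mem]
      have e : (1 + h * g) * z - 1 = z * h * g + z - 1 := by ring
      rw [e]; exact hz
    · intro hu y
      obtain ⟨v, hv⟩ := hu y
      obtain ⟨z, hz⟩ := Ideal.Quotient.mk_surjective (↑v⁻¹ : A ⧸ I)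
      refine ⟨z, ?_⟩
      have hone : Ideal.Quotient.mk I (z * (1 + y * g)) = 1 := by
        rw [map_mul, hz, ← hv]
        exact v.inv_mul
      rw [← map_one (Ideal.Quotient.mk I), Ideal.Quotient.mk_eq_mk_iff_sub_mem] at hone
      have e : z * y * g + z - 1 = z * (1 + y * g) - 1 := by ring
      rw [e]; exact hone
  exact ⟨⟨fun hs => h23.mpr (h13 hs), fun hj => h31 (h23.mp hj)⟩, h23⟩
end

section
/- Let X be a nonempty set and let A be a subring of the ring of all functions X → ℂ (with pointwise operations) such that: A contains all constant functions; every f ∈ A with no zero on X is invertible in A; and A is closed under pointwise complex conjugation (if f ∈ A then x ↦ conj(f(x)) is in A). Then for all f₁, …, fₙ, g ∈ A: Z(f₁) ∩ … ∩ Z(fₙ) ⊆ Z(g) if and only if g lies in the Jacobson radical of the ideal of A generated by f₁, …, fₙ. -/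
theorem stmt_1 {X : Type*} [Nonempty X] (A : Subring (X → ℂ))
    (hconst : ∀ c : ℂ, (fun _ : X => c) ∈ A)
    (hunit : ∀ f : A, (∀ x : X, (f : X → ℂ) x ≠ 0) → IsUnit f)
    (hconj : ∀ f : A, (fun x : X => starRingEnd ℂ ((f : X → ℂ) x)) ∈ A)
    (n : ℕ) (f : Fin n → A) (g : A) :
    (⋂ i, {x : X | (f i : X → ℂ) x = 0}) ⊆ {x : X | (g : X → ℂ) x = 0}
      ↔ g ∈ (Ideal.span (Set.range f)).jacobson := by
  set I : Ideal A := Ideal.span (Set.range f) with hI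
  -- conjugation inside A
  let conjA : A → A := fun h => ⟨fun x => starRingEnd ℂ ((h : X → ℂ) x), hconj h⟩
  -- value of sums
  have coe_sum : ∀ (s : Finset (Fin n)) (F : Fin n → A) (x : X),
      ((↑(∑ i ∈ s, F i) : X → ℂ)) x = ∑ i ∈ s, ((F i : X → ℂ)) x := by
    intro s F x
    induction s using Finset.induction with
    | empty => simp
    | insert _ _ hni ih => simp [Finset.sum_insert hni, ih]
  constructor
  · intro hZ
    rw [Ideal.mem_jacobson_iff]
    intro y
    set p : A := ∑ i, conjA (f i) * f i with hp
    have hpI : p ∈ I := by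
      refine Ideal.sum_mem _ fun i _ => Ideal.mul_mem_left _ _ ?_
      exact Ideal.subset_span ⟨i, rfl⟩
    have hpval : ∀ x : X, ((p : X → ℂ)) x = ∑ i, (Complex.normSq ((f i : X → ℂ) x) : ℂ) := by
      intro x
      rw [hp, coe_sum]
      refine Finset.sum_congr rfl fun i _ => ?_
      simp [conjA, Complex.normSq_eq_conj_mul_self]
    set q : A := 1 + y * g with hq
    set s : A := p + conjA q * q with hs
    have hsval : ∀ x : X, ((s : X → ℂ)) x
        = ((∑ i, Complex.normSq ((f i : X → ℂ) x)) + Complex.normSq ((q : X → ℂ) x) : ℝ) := by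
      intro x
      have : ((s : X → ℂ)) x = ((p : X → ℂ)) x + (Complex.normSq ((q : X → ℂ) x) : ℂ) := by
        simp [hs, conjA, Complex.normSq_eq_conj_mul_self]
      rw [this, hpval]
      push_cast
      ring
    have hsne : ∀ x : X, ((s : X → ℂ)) x ≠ 0 := by
      intro x hx0
      rw [hsval x] at hx0
      have hx0' : (∑ i, Complex.normSq ((f i : X → ℂ) x)) + Complex.normSq ((q : X → ℂ) x) = 0 := by
        exact_mod_cast hx0
      have h1 : (∑ i, Complex.normSq ((f i : X → ℂ) x)) = 0 ∧
          Complex.normSq ((q : X → ℂ) x) = 0 := by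
        constructor
        · nlinarith [Finset.sum_nonneg (fun i (_ : i ∈ Finset.univ) =>
            Complex.normSq_nonneg ((f i : X → ℂ) x)), Complex.normSq_nonneg ((q : X → ℂ) x)]
        · nlinarith [Finset.sum_nonneg (fun i (_ : i ∈ Finset.univ) =>
            Complex.normSq_nonneg ((f i : X → ℂ) x)), Complex.normSq_nonneg ((q : X → ℂ) x)]
      have hfz : ∀ i, ((f i : X → ℂ)) x = 0 := by
        intro i
        have := (Finset.sum_eq_zero_iff_of_nonneg
          (fun i _ => Complex.normSq_nonneg ((f i : X → ℂ) x))).1 h1.1 i (Finset.mem_univ i)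
        exact Complex.normSq_eq_zero.1 this
      have hgx : ((g : X → ℂ)) x = 0 := hZ (Set.mem_iInter.2 fun i => hfz i)
      have hqx : ((q : X → ℂ)) x = 1 := by
        simp [hq, hgx]
      rw [hqx] at h1
      simp at h1
    obtain ⟨u, hu⟩ := hunit s hsne
    refine ⟨↑u⁻¹ * conjA q, ?_⟩
    have key : (↑u⁻¹ * conjA q) * y * g + (↑u⁻¹ * conjA q) - 1 = -(↑u⁻¹ * p) := by
      have h1 : (↑u⁻¹ : A) * s = 1 := by rw [← hu]; exact u.inv_mul
      have h2 : conjA q * q = s - p := by rw [hs]; ring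
      calc (↑u⁻¹ * conjA q) * y * g + (↑u⁻¹ * conjA q) - 1
          = ↑u⁻¹ * (conjA q * (1 + y * g)) - 1 := by ring
        _ = ↑u⁻¹ * (conjA q * q) - 1 := by rw [hq]
        _ = ↑u⁻¹ * (s - p) - 1 := by rw [h2]
        _ = (↑u⁻¹ * s) - ↑u⁻¹ * p - 1 := by ring
        _ = -(↑u⁻¹ * p) := by rw [h1]; ring
    rw [key]
    exact neg_mem (Ideal.mul_mem_left _ _ hpI)
  · intro hg x hx
    simp only [Set.mem_iInter, Set.mem_setOf_eq] at hx
    let ev : A →+* ℂ := (Pi.evalRingHom (fun _ => ℂ) x).comp A.subtype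
    have hsurj : Function.Surjective ev := fun c => ⟨⟨fun _ => c, hconst c⟩, rfl⟩
    haveI : (RingHom.ker ev).IsMaximal := RingHom.ker_isMaximal_of_surjective ev hsurj
    have hle : I ≤ RingHom.ker ev := by
      rw [hI, Ideal.span_le]
      rintro _ ⟨i, rfl⟩
      exact hx i
    have : g ∈ RingHom.ker ev := by
      have := sInf_le (a := RingHom.ker ev)
        (s := {J : Ideal A | I ≤ J ∧ J.IsMaximal}) ⟨hle, ‹_›⟩
      exact this hg
    exact this
end

section
/- Let X be a topological space and let C(X,ℝ) be the ring of continuous real-valued functions on X. Then for all f₁, …, fₙ, g ∈ C(X,ℝ): Z(f₁) ∩ … ∩ Z(fₙ) ⊆ Z(g) if and only if g lies in the Jacobson radical of the ideal of C(X,ℝ) generated by f₁, …, fₙ. -/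
theorem stmt_2 {X : Type*} [TopologicalSpace X]
    (n : ℕ) (f : Fin n → C(X, ℝ)) (g : C(X, ℝ)) :
    (⋂ i, {x : X | f i x = 0}) ⊆ {x : X | g x = 0}
      ↔ g ∈ (Ideal.span (Set.range f)).jacobson := by
  constructor
  · intro hZ
    rw [Ideal.mem_jacobson_iff]
    intro y
    -- s = sum of squares of the f i
    set s : C(X, ℝ) := ∑ i, (f i) * (f i) with hs
    have hs_nonneg : ∀ x, 0 ≤ s x := by
      intro x
      simp only [hs, ContinuousMap.coe_sum, Finset.sum_apply, ContinuousMap.mul_apply]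
      exact Finset.sum_nonneg fun i _ => mul_self_nonneg _
    have hs_zero : ∀ x, s x = 0 → ∀ i, f i x = 0 := by
      intro x hx i
      have := (Finset.sum_eq_zero_iff_of_nonneg
        (fun j _ => mul_self_nonneg (f j x))).mp ?_ i (Finset.mem_univ i)
      · exact mul_self_eq_zero.mp this
      · simpa only [hs, ContinuousMap.coe_sum, Finset.sum_apply,
          ContinuousMap.mul_apply] using hx
    set h : C(X, ℝ) := y * g + 1 with hh
    have hpos : ∀ x, 0 < h x * h x + s x := by
      intro x
      rcases eq_or_lt_of_le (hs_nonneg x) with he | hlt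
      · have hgx : g x = 0 := hZ (by
          simp only [Set.mem_iInter, Set.mem_setOf_eq]
          exact fun i => hs_zero x he.symm i)
        have : h x = 1 := by simp [hh, hgx]
        rw [this, ← he]; norm_num
      · have := mul_self_nonneg (h x)
        linarith
    -- inverse of h^2 + s
    set w : C(X, ℝ) := ⟨fun x => (h x * h x + s x)⁻¹, by
      apply Continuous.inv₀
      · exact Continuous.add (Continuous.mul h.continuous h.continuous) s.continuous
      · exact fun x => ne_of_gt (hpos x)⟩ with hw
    have hwinv : w * (h * h + s) = 1 := by
      ext x
      simp only [hw, ContinuousMap.mul_apply, ContinuousMap.add_apply,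
        ContinuousMap.coe_mk, ContinuousMap.one_apply]
      exact inv_mul_cancel₀ (ne_of_gt (hpos x))
    refine ⟨w * h, ?_⟩
    have key : w * h * y * g + w * h - 1 = -(w * s) := by
      have : w * h * y * g + w * h = w * h * (y * g + 1) := by ring
      rw [this, ← hh]
      have : w * h * h = 1 - w * s := by
        have := hwinv
        linear_combination this
      linear_combination this
    rw [key]
    apply (Ideal.span (Set.range f)).neg_mem
    apply Ideal.mul_mem_left
    rw [hs]
    apply Ideal.sum_mem
    intro i _
    exact Ideal.mul_mem_left _ _ (Ideal.subset_span ⟨i, rfl⟩)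
  · intro hg x hx
    simp only [Set.mem_iInter, Set.mem_setOf_eq] at hx
    -- evaluation at x
    let ev : C(X, ℝ) →+* ℝ := (Pi.evalRingHom (fun _ : X => ℝ) x).comp
      ContinuousMap.coeFnRingHom
    have hev : Function.Surjective ev := fun r => ⟨ContinuousMap.const X r, rfl⟩
    have hmax : (RingHom.ker ev).IsMaximal := RingHom.ker_isMaximal_of_surjective ev hev
    have hle : Ideal.span (Set.range f) ≤ RingHom.ker ev := by
      rw [Ideal.span_le]
      rintro _ ⟨i, rfl⟩
      exact hx i
    rw [Ideal.jacobson, Ideal.mem_sInf] at hg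
    have := hg (show RingHom.ker ev ∈ _ from ⟨hle, hmax⟩)
    exact (RingHom.mem_ker (f := ev)).mp this
end

section
/- Let X be a topological space and let C(X,ℂ) be the ring of continuous complex-valued functions on X. Then for all f₁, …, fₙ, g ∈ C(X,ℂ): Z(f₁) ∩ … ∩ Z(fₙ) ⊆ Z(g) if and only if g lies in the Jacobson radical of the ideal of C(X,ℂ) generated by f₁, …, fₙ. -/
theorem stmt_3 {X : Type*} [TopologicalSpace X]
    (n : ℕ) (f : Fin n → C(X, ℂ)) (g : C(X, ℂ)) :
    (⋂ i, {x : X | f i x = 0}) ⊆ {x : X | g x = 0}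
      ↔ g ∈ (Ideal.span (Set.range f)).jacobson := by
  constructor
  · intro hZ
    rw [Ideal.mem_jacobson_iff]
    intro y
    set u : C(X, ℂ) := y * g + 1 with hu
    set s : C(X, ℂ) := ∑ i, star (f i) * f i with hs
    set w : C(X, ℂ) := s + star u * u with hw
    have hwx : ∀ x, w x = (↑(∑ i, Complex.normSq (f i x) + Complex.normSq (u x)) : ℂ) := by
      intro x
      simp [hw, hs, Complex.normSq_eq_conj_mul_self]
    have hwne : ∀ x, w x ≠ 0 := by
      intro x hx
      rw [hwx x] at hx
      norm_cast at hx
      have h1 : ∀ i, Complex.normSq (f i x) = 0 ∧ Complex.normSq (u x) = 0 → True := fun _ _ => trivial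
      have hsum : ∑ i, Complex.normSq (f i x) = 0 ∧ Complex.normSq (u x) = 0 := by
        constructor
        · nlinarith [Complex.normSq_nonneg (u x), Finset.sum_nonneg (fun i (_ : i ∈ Finset.univ) => Complex.normSq_nonneg (f i x))]
        · nlinarith [Complex.normSq_nonneg (u x), Finset.sum_nonneg (fun i (_ : i ∈ Finset.univ) => Complex.normSq_nonneg (f i x))]
      have hfx : ∀ i, f i x = 0 := by
        intro i
        have := (Finset.sum_eq_zero_iff_of_nonneg (fun i _ => Complex.normSq_nonneg (f i x))).mp hsum.1 i (Finset.mem_univ i)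
        exact Complex.normSq_eq_zero.mp this
      have hgx : g x = 0 := hZ (by simpa using hfx)
      have hux : u x = 0 := Complex.normSq_eq_zero.mp hsum.2
      rw [hu] at hux
      simp [hgx] at hux
    have hcont : Continuous fun x => (w x)⁻¹ := (map_continuous w).inv₀ hwne
    set winv : C(X, ℂ) := ⟨fun x => (w x)⁻¹, hcont⟩ with hwinv
    have hwinvw : winv * w = 1 := by
      ext x
      exact inv_mul_cancel₀ (hwne x)
    refine ⟨winv * star u, ?_⟩
    have hsI : s ∈ Ideal.span (Set.range f) := by
      rw [hs]
      exact Ideal.sum_mem _ fun i _ =>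
        Ideal.mul_mem_left _ _ (Ideal.subset_span ⟨i, rfl⟩)
    have hkey : winv * star u * y * g + winv * star u - 1 = -(winv * s) := by
      have : winv * star u * y * g + winv * star u = winv * (star u * u) := by
        rw [hu]; ring
      rw [this]
      have h2 : star u * u = w - s := by rw [hw]; ring
      rw [h2, mul_sub, hwinvw]
      ring
    rw [hkey]
    exact neg_mem (Ideal.mul_mem_left _ _ hsI)
  · intro hg x hx
    simp only [Set.mem_iInter, Set.mem_setOf_eq] at hx
    set φ := ContinuousMap.evalAlgHom ℂ ℂ x with hφ
    have hsurj : Function.Surjective φ.toRingHom := fun c => ⟨ContinuousMap.const X c, rfl⟩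
    have hmax : (RingHom.ker φ.toRingHom).IsMaximal :=
      RingHom.ker_isMaximal_of_surjective _ hsurj
    have hle : Ideal.span (Set.range f) ≤ RingHom.ker φ.toRingHom := by
      rw [Ideal.span_le]
      rintro _ ⟨i, rfl⟩
      exact hx i
    have : g ∈ RingHom.ker φ.toRingHom :=
      (sInf_le ⟨hle, hmax⟩ : (Ideal.span (Set.range f)).jacobson ≤ _) hg
    exact this
end

section
/- Let K be a field of characteristic ≠ 2 equipped with a nontrivial valuation v : K → Γ₀ into a linearly ordered commutative group with zero (i.e. there is x ∈ K with v(x) ≠ 0 and v(x) ≠ 1), and give K the valuation topology. Let X be a topological space and let C(X,K) be the ring of continuous functions X → K. Then for all f₁, …, fₙ, g ∈ C(X,K): Z(f₁) ∩ … ∩ Z(fₙ) ⊆ Z(g) if and only if g lies in the Jacobson radical of the ideal of C(X,K) generated by f₁, …, fₙ. -/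
section Aux

variable {K : Type*} [Field K] {Γ₀ : Type*}
    [LinearOrderedCommGroupWithZero Γ₀] [Valued K Γ₀]
    {X : Type*} [TopologicalSpace X]

/-- The piecewise inverse of `u` on a clopen set `T` (zero off `T`). -/
noncomputable def pcwInv (u : C(X, K)) (T : Set X) (hT : IsClopen T)
    (hu : ∀ x ∈ T, u x ≠ 0) : C(X, K) :=
  ⟨T.indicator fun x => (u x)⁻¹, by
    refine continuous_iff_continuousAt.mpr fun x => ?_
    by_cases hx : x ∈ T
    · have hc : ContinuousAt (fun x => (u x)⁻¹) x :=
        u.continuous.continuousAt.inv₀ (hu x hx)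
      apply hc.congr
      filter_upwards [hT.isOpen.mem_nhds hx] with y hy
      rw [Set.indicator_of_mem hy]
    · apply (continuousAt_const (y := (0 : K))).congr
      filter_upwards [hT.compl.isOpen.mem_nhds hx] with y hy
      rw [Set.indicator_of_notMem hy]⟩

theorem pcwInv_apply_of_mem (u : C(X, K)) (T : Set X) (hT : IsClopen T)
    (hu : ∀ x ∈ T, u x ≠ 0) {x : X} (hx : x ∈ T) :
    pcwInv u T hT hu x = (u x)⁻¹ := by
  simp only [pcwInv, ContinuousMap.coe_mk]
  exact Set.indicator_of_mem hx _

theorem pcwInv_apply_of_not_mem (u : C(X, K)) (T : Set X) (hT : IsClopen T)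
    (hu : ∀ x ∈ T, u x ≠ 0) {x : X} (hx : x ∉ T) :
    pcwInv u T hT hu x = 0 := by
  simp only [pcwInv, ContinuousMap.coe_mk]
  exact Set.indicator_of_notMem hx _

/-- Characteristic function of a clopen set. -/
noncomputable def chi (T : Set X) (hT : IsClopen T) : C(X, K) :=
  pcwInv 1 T hT fun _ _ => one_ne_zero

theorem chi_apply_of_mem (T : Set X) (hT : IsClopen T) {x : X} (hx : x ∈ T) :
    chi (K := K) T hT x = 1 := by
  simp [chi, pcwInv_apply_of_mem (1 : C(X, K)) T hT (fun _ _ => one_ne_zero) hx]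

theorem chi_apply_of_not_mem (T : Set X) (hT : IsClopen T) {x : X} (hx : x ∉ T) :
    chi (K := K) T hT x = 0 := pcwInv_apply_of_not_mem _ _ _ _ hx

theorem argmax_nbhd {m : ℕ} (h : Fin (m + 1) → C(X, K))
    (hnz : ∀ x : X, ∃ j, h j x ≠ 0) (x : X) :
    ∃ N ∈ nhds x, ∀ y ∈ N, ∀ j,
      ((∀ i, Valued.v (h i y) ≤ Valued.v (h j y)) ↔
        (∀ i, Valued.v (h i x) ≤ Valued.v (h j x))) := by
  obtain ⟨j₀, hj₀⟩ := Finite.exists_max fun j => Valued.v (h j x)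
  set M := Valued.v (h j₀ x) with hMdef
  have hM0 : M ≠ 0 := by
    obtain ⟨j₁, hj₁⟩ := hnz x
    intro hc
    rw [hc] at hj₀
    exact hj₁ ((Valuation.zero_iff _).mp (le_antisymm (hj₀ j₁) zero_le'))
  refine ⟨⋂ i, (h i) ⁻¹' {a | Valued.v (a - h i x) < M}, ?_, ?_⟩
  · rw [Filter.iInter_mem]
    intro i
    apply (h i).continuous.continuousAt.preimage_mem_nhds
    rw [Valued.mem_nhds]
    exact ⟨Units.mk0 ((Valued.v : Valuation K Γ₀).restrict (h j₀ x)) (by simpa [hMdef] using hM0),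
      fun y hy => by simpa [hMdef] using hy⟩
  · intro y hy j
    simp only [Set.mem_iInter, Set.mem_preimage, Set.mem_setOf_eq] at hy
    have fact1 : ∀ i, Valued.v (h i y) ≤ M := by
      intro i
      have he : h i x + (h i y - h i x) = h i y := by ring
      calc Valued.v (h i y) = Valued.v (h i x + (h i y - h i x)) := by rw [he]
        _ ≤ max (Valued.v (h i x)) (Valued.v (h i y - h i x)) := Valuation.map_add _ _ _
        _ ≤ M := max_le (hj₀ i) (le_of_lt (hy i))
    have fact2 : ∀ i, Valued.v (h i x) = M → Valued.v (h i y) = M := by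
      intro i hvi
      have h1 : Valued.v (h i x + (h i y - h i x)) = Valued.v (h i x) :=
        Valued.v.map_add_eq_of_lt_left (by rw [hvi]; exact hy i)
      rw [show h i x + (h i y - h i x) = h i y by ring] at h1
      rw [h1, hvi]
    have fact3 : ∀ i, Valued.v (h i x) < M → Valued.v (h i y) < M := by
      intro i hvi
      rw [show h i y = h i x + (h i y - h i x) by ring]
      exact lt_of_le_of_lt (Valuation.map_add _ _ _) (max_lt hvi (hy i))
    have hjy0 : Valued.v (h j₀ y) = M := fact2 j₀ rfl
    constructor
    · intro hP
      have hjyM : Valued.v (h j y) = M := le_antisymm (fact1 j) (hjy0 ▸ hP j₀)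
      have hjxM : Valued.v (h j x) = M := by
        by_contra hne
        exact absurd hjyM (ne_of_lt (fact3 j (lt_of_le_of_ne (hj₀ j) hne)))
      intro i
      rw [hjxM]
      exact hj₀ i
    · intro hP
      have hjxM : Valued.v (h j x) = M := le_antisymm (hj₀ j) (hP j₀)
      intro i
      rw [fact2 j hjxM]
      exact fact1 i

theorem isClopen_argmax {m : ℕ} (h : Fin (m + 1) → C(X, K))
    (hnz : ∀ x : X, ∃ j, h j x ≠ 0) (j : Fin (m + 1)) :
    IsClopen {x : X | ∀ i, Valued.v (h i x) ≤ Valued.v (h j x)} := by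
  constructor
  · rw [← isOpen_compl_iff, isOpen_iff_mem_nhds]
    intro x hx
    obtain ⟨N, hN, hNP⟩ := argmax_nbhd h hnz x
    filter_upwards [hN] with y hy
    exact fun hP => hx ((hNP y hy j).mp hP)
  · rw [isOpen_iff_mem_nhds]
    intro x hx
    obtain ⟨N, hN, hNP⟩ := argmax_nbhd h hnz x
    filter_upwards [hN] with y hy
    exact (hNP y hy j).mpr hx

theorem chi_mem_ideal {ι : Type*} (I : Ideal C(X, K)) (V : ι → Set X)
    (hV : ∀ i, IsClopen (V i)) (u : ι → C(X, K)) (hu : ∀ i, u i ∈ I)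
    (hnz : ∀ i, ∀ x ∈ V i, u i x ≠ 0) (s : Finset ι) :
    ∀ (C : Set X) (hC : IsClopen C), C ⊆ (⋃ i ∈ s, V i) → chi C hC ∈ I := by
  classical
  induction s using Finset.induction_on with
  | empty =>
    intro C hC hsub
    have hCe : ∀ x, x ∉ C := by
      intro x hx
      simpa using hsub hx
    have : chi (K := K) C hC = 0 := by
      ext x
      simp [chi_apply_of_not_mem _ _ (hCe x)]
    rw [this]
    exact I.zero_mem
  | @insert a s ha ih =>
    intro C hC hsub
    have h1 : chi (C ∩ V a) (hC.inter (hV a)) ∈ I := by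
      have he : chi (K := K) (C ∩ V a) (hC.inter (hV a)) =
          pcwInv (u a) (C ∩ V a) (hC.inter (hV a)) (fun x hx => hnz a x hx.2) * u a := by
        ext x
        by_cases hx : x ∈ C ∩ V a
        · rw [chi_apply_of_mem _ _ hx]
          simp [pcwInv_apply_of_mem _ _ _ _ hx, inv_mul_cancel₀ (hnz a x hx.2)]
        · rw [chi_apply_of_not_mem _ _ hx]
          simp [pcwInv_apply_of_not_mem _ _ _ _ hx]
      rw [he]
      exact I.mul_mem_left _ (hu a)
    have h2 : chi (C \ V a) (hC.diff (hV a)) ∈ I := by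
      apply ih
      intro x hx
      have := hsub hx.1
      simp only [Finset.mem_insert, Set.mem_iUnion, exists_prop] at this ⊢
      obtain ⟨i, hi1 | hi1, hi2⟩ := this
      · exact absurd (hi1 ▸ hi2) hx.2
      · exact ⟨i, hi1, hi2⟩
    have h3 : chi (K := K) C hC = chi (C ∩ V a) (hC.inter (hV a)) +
        chi (C \ V a) (hC.diff (hV a)) := by
      ext x
      by_cases hxC : x ∈ C
      · by_cases hxV : x ∈ V a
        · rw [ContinuousMap.add_apply, chi_apply_of_mem _ _ hxC,
            chi_apply_of_mem _ _ (Set.mem_inter hxC hxV),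
            chi_apply_of_not_mem _ _ (fun hh => hh.2 hxV)]
          ring
        · rw [ContinuousMap.add_apply, chi_apply_of_mem _ _ hxC,
            chi_apply_of_not_mem _ _ (fun hh => hxV hh.2),
            chi_apply_of_mem _ _ (show x ∈ C \ V a from ⟨hxC, hxV⟩)]
          ring
      · rw [ContinuousMap.add_apply, chi_apply_of_not_mem _ _ hxC,
          chi_apply_of_not_mem _ _ (fun hh => hxC hh.1),
          chi_apply_of_not_mem _ _ (fun hh => hxC hh.1)]
        ring
    rw [h3]
    exact I.add_mem h1 h2

end Aux
theorem stmt_4 {K : Type*} [Field K] {Γ₀ : Type*}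
    [LinearOrderedCommGroupWithZero Γ₀] [Valued K Γ₀]
    (hchar : (2 : K) ≠ 0)
    (hnontriv : ∃ x : K, Valued.v x ≠ 0 ∧ Valued.v x ≠ 1)
    {X : Type*} [TopologicalSpace X]
    (n : ℕ) (f : Fin n → C(X, K)) (g : C(X, K)) :
    (⋂ i, {x : X | f i x = 0}) ⊆ {x : X | g x = 0}
      ↔ g ∈ (Ideal.span (Set.range f)).jacobson := by
  constructor
  · -- hard direction
    intro hZ
    rw [Ideal.mem_jacobson_iff]
    intro y
    set w : C(X, K) := 1 + y * g with hw
    set h : Fin (n + 1) → C(X, K) := Fin.cases w f with hh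
    have hh0 : h 0 = w := rfl
    have hhs : ∀ i : Fin n, h i.succ = f i := fun i => rfl
    have hnz : ∀ x : X, ∃ j, h j x ≠ 0 := by
      intro x
      by_cases hx : ∀ i, f i x = 0
      · refine ⟨0, ?_⟩
        have hgx : g x = 0 := hZ (Set.mem_iInter.mpr hx)
        rw [hh0, hw]
        simp [hgx]
      · push_neg at hx
        obtain ⟨i, hi⟩ := hx
        exact ⟨i.succ, by rw [hhs]; exact hi⟩
    set S : Fin (n + 1) → Set X :=
      fun j => {x | ∀ i, Valued.v (h i x) ≤ Valued.v (h j x)} with hS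
    have hSclopen : ∀ j, IsClopen (S j) := isClopen_argmax h hnz
    have hScov : ∀ x, ∃ j, x ∈ S j := fun x => Finite.exists_max fun j => Valued.v (h j x)
    have hSnz : ∀ j, ∀ x ∈ S j, h j x ≠ 0 := by
      intro j x hx hc
      obtain ⟨j₁, hj₁⟩ := hnz x
      have h1 := hx j₁
      rw [hc, map_zero] at h1
      exact hj₁ ((Valuation.zero_iff _).mp (le_antisymm h1 zero_le'))
    set z := pcwInv (h 0) (S 0) (hSclopen 0) (hSnz 0) with hz
    refine ⟨z, ?_⟩
    have hkey : z * y * g + z - 1 = - chi ((S 0)ᶜ) (hSclopen 0).compl := by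
      ext x
      simp only [ContinuousMap.sub_apply, ContinuousMap.add_apply, ContinuousMap.mul_apply,
        ContinuousMap.one_apply, ContinuousMap.neg_apply]
      by_cases hx : x ∈ S 0
      · rw [chi_apply_of_not_mem _ _ (by simpa using hx)]
        have h0x : h 0 x ≠ 0 := hSnz 0 x hx
        have hzx : z x = (h 0 x)⁻¹ := pcwInv_apply_of_mem _ _ _ _ hx
        have hwx : h 0 x = 1 + y x * g x := by
          rw [hh0, hw]; simp
        rw [hzx, hwx]
        have hne : (1 : K) + y x * g x ≠ 0 := by rw [← hwx]; exact h0x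
        field_simp
        ring
      · rw [chi_apply_of_mem _ _ (by simpa using hx)]
        have hzx : z x = 0 := pcwInv_apply_of_not_mem _ _ _ _ hx
        rw [hzx]
        ring
    rw [hkey]
    apply neg_mem
    apply chi_mem_ideal (Ideal.span (Set.range f)) (fun i : Fin n => S i.succ)
      (fun i => hSclopen i.succ) f (fun i => Ideal.subset_span ⟨i, rfl⟩)
      (fun i x hx => by rw [← hhs i]; exact hSnz i.succ x hx) Finset.univ
    intro x hx
    obtain ⟨j, hj⟩ := hScov x
    have hj0 : j ≠ 0 := by
      intro hc
      exact hx (hc ▸ hj)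
    obtain ⟨i, rfl⟩ := Fin.eq_succ_of_ne_zero hj0
    simp only [Set.mem_iUnion, exists_prop]
    exact ⟨i, Finset.mem_univ i, hj⟩
  · -- easy direction
    intro hg x hx
    simp only [Set.mem_iInter, Set.mem_setOf_eq] at hx
    let ev : C(X, K) →+* K := (Pi.evalRingHom (fun _ : X => K) x).comp
      (ContinuousMap.coeFnRingHom)
    have hev : ∀ u : C(X, K), ev u = u x := fun u => rfl
    have hsurj : Function.Surjective ev := fun c => ⟨ContinuousMap.const X c, rfl⟩
    have hmax : (RingHom.ker ev).IsMaximal := RingHom.ker_isMaximal_of_surjective ev hsurj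
    have hle : Ideal.span (Set.range f) ≤ RingHom.ker ev := by
      rw [Ideal.span_le]
      rintro _ ⟨i, rfl⟩
      rw [SetLike.mem_coe, RingHom.mem_ker, hev]
      exact hx i
    have hgk : g ∈ RingHom.ker ev :=
      Ideal.mem_sInf.mp hg ⟨hle, hmax⟩
    rw [RingHom.mem_ker, hev] at hgk
    exact hgk
end

section
/- Let K be a field that is not algebraically closed. Then there exist polynomials u(x,y) and v(x,y) in two variables over K such that for all a, b ∈ K: a·u(a,b) + b·v(a,b) = 0 if and only if a = 0 and b = 0. -/
open Polynomial Finset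

theorem stmt_5 {K : Type*} [Field K] (hK : ¬ IsAlgClosed K) :
    ∃ u v : MvPolynomial (Fin 2) K,
      ∀ a b : K,
        a * MvPolynomial.eval ![a, b] u + b * MvPolynomial.eval ![a, b] v = 0
          ↔ a = 0 ∧ b = 0 := by
  obtain ⟨p, hmon, hirr, hroot⟩ :
      ∃ p : K[X], p.Monic ∧ Irreducible p ∧ ¬∃ x, p.eval x = 0 := by
    by_contra h
    push_neg at h
    exact hK (IsAlgClosed.of_exists_root K fun p hm hi => h p hm hi)
  set n := p.natDegree with hn
  have hn1 : 0 < n := hirr.natDegree_pos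
  refine ⟨∑ i ∈ range n, MvPolynomial.C (p.coeff (i + 1)) *
      MvPolynomial.X 0 ^ i * MvPolynomial.X 1 ^ (n - 1 - i),
    MvPolynomial.C (p.coeff 0) * MvPolynomial.X 1 ^ (n - 1), fun a b => ?_⟩
  have hS : a * MvPolynomial.eval ![a, b] (∑ i ∈ range n,
        MvPolynomial.C (p.coeff (i + 1)) * MvPolynomial.X 0 ^ i *
          MvPolynomial.X 1 ^ (n - 1 - i)) +
      b * MvPolynomial.eval ![a, b]
        (MvPolynomial.C (p.coeff 0) * MvPolynomial.X 1 ^ (n - 1)) =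
      ∑ i ∈ range (n + 1), p.coeff i * a ^ i * b ^ (n - i) := by
    rw [Finset.sum_range_succ']
    simp only [map_sum, map_mul, map_pow, MvPolynomial.eval_C, MvPolynomial.eval_X,
      Matrix.cons_val_zero, Matrix.cons_val_one, Matrix.head_cons, Finset.mul_sum]
    congr 1
    · refine Finset.sum_congr rfl fun i hi => ?_
      have : n - (i + 1) = n - 1 - i := by omega
      rw [this]; ring
    · rw [show n - 0 = (n - 1) + 1 by omega, pow_succ]
      ring
  rw [hS]
  constructor
  · intro h
    by_contra hab
    rcases eq_or_ne b 0 with hb | hb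
    · have ha : a ≠ 0 := by
        rcases not_and_or.mp hab with h' | h'
        · exact h'
        · exact absurd hb h'
      rw [Finset.sum_eq_single n (fun i hi hine => by
          subst hb
          have : n - i ≠ 0 := by
            simp only [Finset.mem_range] at hi; omega
          simp [zero_pow this]) (by simp)] at h
      rw [Nat.sub_self, pow_zero, mul_one, hmon.coeff_natDegree, one_mul] at h
      exact pow_ne_zero n ha h
    · apply hroot
      refine ⟨a / b, ?_⟩
      have hbn : b ^ n ≠ 0 := pow_ne_zero n hb
      have : b ^ n * p.eval (a / b) = 0 := by
        rw [Polynomial.eval_eq_sum_range, Finset.mul_sum, ← h]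
        refine Finset.sum_congr rfl fun i hi => ?_
        have hi' : i ≤ n := by simpa [Nat.lt_succ_iff] using hi
        rw [div_pow]
        field_simp
        rw [mul_assoc (p.coeff i * a ^ i), ← pow_add, show i + (n - i) = n by omega]
        ring
      rcases mul_eq_zero.mp this with h' | h'
      · exact absurd h' hbn
      · exact h'
  · rintro ⟨ha, hb⟩
    subst ha; subst hb
    refine Finset.sum_eq_zero fun i hi => ?_
    rcases Nat.eq_zero_or_pos i with h0 | h0
    · subst h0
      simp only [pow_zero, one_mul, zero_pow (by omega : n - 0 ≠ 0), mul_zero]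
    · simp [zero_pow (by omega : i ≠ 0)]
end

section
/- Let K be a field of characteristic ≠ 2 equipped with a valuation v : K → Γ₀ into a linearly ordered commutative group with zero, and give K the valuation topology (and K × K the product topology). Define u, w : K × K → K by: u(x,y) = x + y if v(x − y) < v(x + y) and u(x,y) = x − y otherwise; w(x,y) = x + y if v(x − y) < v(x + y) and w(x,y) = y − x otherwise. Then u and w are continuous, and for all x, y ∈ K: x·u(x,y) + y·w(x,y) = 0 if and only if x = 0 and y = 0. -/
open Filter Topology

private lemma aux_cont {K : Type*} [Field K] {Γ₀ : Type*}
    [LinearOrderedCommGroupWithZero Γ₀] [Valued K Γ₀]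
    (g : K × K → K) (hg : Continuous g)
    (hgv : ∀ q : K × K, Valued.v (g q) = Valued.v (q.1 - q.2)) :
    Continuous (fun q : K × K => if Valued.v (q.1 - q.2) < Valued.v (q.1 + q.2)
        then q.1 + q.2 else g q) := by
  set v : Valuation K Γ₀ := Valued.v
  have hs : Continuous (fun q : K × K => q.1 + q.2) := continuous_fst.add continuous_snd
  have hd : Continuous (fun q : K × K => q.1 - q.2) := continuous_fst.sub continuous_snd
  rw [continuous_iff_continuousAt]
  intro p
  rcases lt_trichotomy (v (p.1 - p.2)) (v (p.1 + p.2)) with hlt | heq | hgt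
  · -- condition holds in a neighborhood
    have hne : v (p.1 + p.2) ≠ 0 := fun h0 => by simp [h0] at hlt
    have h1 : {q : K × K | v (q.1 + q.2) = v (p.1 + p.2)} ∈ 𝓝 p :=
      hs.continuousAt.preimage_mem_nhds (Valued.locally_const hne)
    have h2 : {q : K × K | v (q.1 - q.2) < v (p.1 + p.2)} ∈ 𝓝 p := by
      have key : {z : K | v z < v (p.1 + p.2)} ∈ 𝓝 (p.1 - p.2) := by
        rw [Valued.mem_nhds]
        refine ⟨Units.mk0 (v.restrict (p.1 + p.2)) (by rwa [Ne, Valuation.restrict_eq_zero_iff]), fun y hy => ?_⟩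
        simp only [Units.val_mk0, Set.mem_setOf_eq] at hy ⊢
        calc v y = v (y - (p.1 - p.2) + (p.1 - p.2)) := by ring_nf
          _ ≤ max (v (y - (p.1 - p.2))) (v (p.1 - p.2)) := Valuation.map_add _ _ _
          _ < v (p.1 + p.2) := max_lt ((v.restrict_lt_iff).mp hy) hlt
      exact hd.continuousAt.preimage_mem_nhds key
    have hev : (fun q : K × K => if v (q.1 - q.2) < v (q.1 + q.2)
        then q.1 + q.2 else g q) =ᶠ[𝓝 p] (fun q : K × K => q.1 + q.2) := by
      filter_upwards [h1, h2] with q hq1 hq2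
      rw [if_pos (hq1 ▸ hq2)]
    exact hs.continuousAt.congr hev.symm
  · -- equal values
    by_cases hne : v (p.1 - p.2) = 0
    · -- both zero: p.1 + p.2 = 0 and p.1 - p.2 = 0
      have hz1 : p.1 + p.2 = 0 := by
        have h0 : v (p.1 + p.2) = 0 := heq ▸ hne
        exact (Valuation.zero_iff v).mp h0
      have hfp : (if v (p.1 - p.2) < v (p.1 + p.2) then p.1 + p.2 else g p) = 0 := by
        rw [if_neg (by rw [heq]; exact lt_irrefl _), ← Valuation.zero_iff v, hgv, hne]
      unfold ContinuousAt
      simp only [hfp]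
      intro s hs'
      rw [Valued.mem_nhds_zero] at hs'
      obtain ⟨γ, hγ⟩ := hs'
      have kn1 : {z : K | v.restrict (z - p.1) < γ.1} ∈ 𝓝 p.1 := by
        rw [Valued.mem_nhds]; exact ⟨γ, fun y hy => hy⟩
      have kn2 : {z : K | v.restrict (z - p.2) < γ.1} ∈ 𝓝 p.2 := by
        rw [Valued.mem_nhds]; exact ⟨γ, fun y hy => hy⟩
      have hn1 : (fun q : K × K => q.1) ⁻¹' {z : K | v.restrict (z - p.1) < γ.1} ∈ 𝓝 p :=
        continuous_fst.continuousAt.preimage_mem_nhds kn1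
      have hn2 : (fun q : K × K => q.2) ⁻¹' {z : K | v.restrict (z - p.2) < γ.1} ∈ 𝓝 p :=
        continuous_snd.continuousAt.preimage_mem_nhds kn2
      rw [Filter.mem_map]
      filter_upwards [hn1, hn2] with q hq1 hq2
      apply hγ
      have hz2 : p.1 - p.2 = 0 := (Valuation.zero_iff v).mp hne
      have hsum : v.restrict (q.1 + q.2) < γ.1 := by
        have he : q.1 + q.2 = (q.1 - p.1) + (q.2 - p.2) + (p.1 + p.2) := by ring
        rw [he, hz1, add_zero]
        exact lt_of_le_of_lt (Valuation.map_add _ _ _) (max_lt hq1 hq2)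
      have hdiff : v.restrict (q.1 - q.2) < γ.1 := by
        have he : q.1 - q.2 = (q.1 - p.1) - (q.2 - p.2) + (p.1 - p.2) := by ring
        rw [he, hz2, add_zero]
        exact lt_of_le_of_lt (Valuation.map_sub _ _ _) (max_lt hq1 hq2)
      by_cases hc : v (q.1 - q.2) < v (q.1 + q.2)
      · simpa [hc] using hsum
      · simp only [hc, ↓reduceIte, Set.mem_setOf_eq]; exact lt_of_eq_of_lt ((v.restrict_inj).mpr (hgv q)) hdiff
    · -- both equal and nonzero: condition false in a neighborhood
      have hne' : v (p.1 + p.2) ≠ 0 := heq ▸ hne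
      have h1 : {q : K × K | v (q.1 + q.2) = v (p.1 + p.2)} ∈ 𝓝 p :=
        hs.continuousAt.preimage_mem_nhds (Valued.locally_const hne')
      have h2 : {q : K × K | v (q.1 - q.2) = v (p.1 - p.2)} ∈ 𝓝 p :=
        hd.continuousAt.preimage_mem_nhds (Valued.locally_const hne)
      have hev : (fun q : K × K => if v (q.1 - q.2) < v (q.1 + q.2)
          then q.1 + q.2 else g q) =ᶠ[𝓝 p] g := by
        filter_upwards [h1, h2] with q hq1 hq2
        rw [if_neg]
        rw [hq1, hq2, heq]
        exact lt_irrefl _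
      exact hg.continuousAt.congr hev.symm
  · -- condition false in a neighborhood (strict)
    have hne : v (p.1 - p.2) ≠ 0 := fun h0 => by simp [h0] at hgt
    have h1 : {q : K × K | v (q.1 - q.2) = v (p.1 - p.2)} ∈ 𝓝 p :=
      hd.continuousAt.preimage_mem_nhds (Valued.locally_const hne)
    have h2 : {q : K × K | v (q.1 + q.2) < v (p.1 - p.2)} ∈ 𝓝 p := by
      have key : {z : K | v z < v (p.1 - p.2)} ∈ 𝓝 (p.1 + p.2) := by
        rw [Valued.mem_nhds]
        refine ⟨Units.mk0 (v.restrict (p.1 - p.2)) (by rwa [Ne, Valuation.restrict_eq_zero_iff]), fun y hy => ?_⟩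
        simp only [Units.val_mk0, Set.mem_setOf_eq] at hy ⊢
        calc v y = v (y - (p.1 + p.2) + (p.1 + p.2)) := by ring_nf
          _ ≤ max (v (y - (p.1 + p.2))) (v (p.1 + p.2)) := Valuation.map_add _ _ _
          _ < v (p.1 - p.2) := max_lt ((v.restrict_lt_iff).mp hy) hgt
      exact hs.continuousAt.preimage_mem_nhds key
    have hev : (fun q : K × K => if v (q.1 - q.2) < v (q.1 + q.2)
        then q.1 + q.2 else g q) =ᶠ[𝓝 p] g := by
      filter_upwards [h1, h2] with q hq1 hq2
      rw [if_neg (not_lt.mpr (le_of_lt (hq1 ▸ hq2)))]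
    exact hg.continuousAt.congr hev.symm

theorem stmt_7 {K : Type*} [Field K] {Γ₀ : Type*}
    [LinearOrderedCommGroupWithZero Γ₀] [Valued K Γ₀]
    (hchar : (2 : K) ≠ 0)
    (u w : K × K → K)
    (hu : u = fun q => if Valued.v (q.1 - q.2) < Valued.v (q.1 + q.2)
        then q.1 + q.2 else q.1 - q.2)
    (hw : w = fun q => if Valued.v (q.1 - q.2) < Valued.v (q.1 + q.2)
        then q.1 + q.2 else q.2 - q.1) :
    Continuous u ∧ Continuous w ∧
      ∀ x y : K, x * u (x, y) + y * w (x, y) = 0 ↔ x = 0 ∧ y = 0 := by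
  have hcu : Continuous u := by
    rw [hu]
    exact aux_cont (fun q => q.1 - q.2) (continuous_fst.sub continuous_snd) (fun q => rfl)
  have hcw : Continuous w := by
    rw [hw]
    exact aux_cont (fun q => q.2 - q.1) (continuous_snd.sub continuous_fst)
      (fun q => by
        show Valued.v (q.2 - q.1) = _
        rw [show q.2 - q.1 = -(q.1 - q.2) by ring, Valuation.map_neg])
  refine ⟨hcu, hcw, fun x y => ?_⟩
  subst hu hw
  simp only []
  by_cases hc : Valued.v (x - y) < Valued.v (x + y)
  · rw [if_pos hc, if_pos hc]
    constructor
    · intro h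
      have h2 : (x + y) * (x + y) = 0 := by linear_combination h
      have hxy : x + y = 0 := by
        rcases mul_eq_zero.mp h2 with h' | h' <;> exact h'
      rw [hxy] at hc
      simp at hc
    · rintro ⟨hx, hy⟩
      rw [hx, hy]; ring
  · rw [if_neg hc, if_neg hc]
    constructor
    · intro h
      have h2 : (x - y) * (x - y) = 0 := by linear_combination h
      have hxy : x - y = 0 := by
        rcases mul_eq_zero.mp h2 with h' | h' <;> exact h'
      have hxey : x = y := sub_eq_zero.mp hxy
      push_neg at hc
      rw [hxy] at hc
      simp only [map_zero, le_zero_iff] at hc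
      have hsum : x + y = 0 := (Valuation.zero_iff Valued.v).mp hc
      have hx0 : x = 0 := by
        have h2x : 2 * x = 0 := by rw [hxey] at hsum ⊢; linear_combination hsum
        exact (mul_eq_zero.mp h2x).resolve_left hchar
      exact ⟨hx0, hxey ▸ hx0⟩
    · rintro ⟨hx, hy⟩
      rw [hx, hy]; ring
end

section
/- Let K be a topological field and O a subring of K whose fraction field is K. Assume there exists a nonzero ε ∈ O lying in the Jacobson radical of the ring O such that the set ε·O = {ε·a : a ∈ O} is a neighborhood of 0 in K. Then for every topological space X, every continuous function f : X → K, and every x₀ ∈ X with f(x₀) ≠ 0, there is a neighborhood U of x₀ in X such that for all x ∈ U, the element f(x)/f(x₀) is a unit of O (that is, f(x)/f(x₀) ∈ O and f(x₀)/f(x) ∈ O). -/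
theorem stmt_8 {K : Type*} [Field K] [TopologicalSpace K] [IsTopologicalDivisionRing K]
    (O : Subring K) [IsFractionRing O K]
    (ε : O) (hε : ε ≠ 0) (hjac : ε ∈ Ideal.jacobson (⊥ : Ideal O))
    (hnhds : {x : K | ∃ a : O, x = (ε : K) * (a : K)} ∈ nhds (0 : K)) :
    ∀ (X : Type*) [TopologicalSpace X] (f : X → K), Continuous f →
      ∀ x₀ : X, f x₀ ≠ 0 →
        ∃ U ∈ nhds x₀, ∀ x ∈ U, f x / f x₀ ∈ O ∧ f x₀ / f x ∈ O := by
  intro X _ f hf x₀ hx₀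
  have hjac' : ∀ a : O, IsUnit (ε * a + 1) := (Ideal.mem_jacobson_bot).1 hjac
  -- h x = f x / f x₀ - 1 is continuous and h x₀ = 0
  have hcont : Continuous (fun x => f x / f x₀ - 1) := by
    exact (hf.div_const _).sub continuous_const
  have h0 : (fun x => f x / f x₀ - 1) x₀ = 0 := by
    simp [div_self hx₀]
  have hU : (fun x => f x / f x₀ - 1) ⁻¹' {x : K | ∃ a : O, x = (ε : K) * (a : K)}
      ∈ nhds x₀ := by
    have := hcont.continuousAt (x := x₀)
    exact this (h0 ▸ hnhds)
  refine ⟨_, hU, fun x hx => ?_⟩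
  obtain ⟨a, ha⟩ := hx
  obtain ⟨v, hv⟩ := hjac' a
  have hfx : f x / f x₀ = ((ε * a + 1 : O) : K) := by
    simp only at ha
    push_cast
    linear_combination ha
  have hfxv : f x / f x₀ = (((v : O) : K)) := by rw [hfx, hv]
  constructor
  · rw [hfxv]; exact (v : O).2
  · have hmul : ((v : O) : K) * (((v⁻¹ : Oˣ) : O) : K) = 1 := by
      norm_cast
      exact_mod_cast v.mul_inv
    have : f x₀ / f x = (f x / f x₀)⁻¹ := (inv_div _ _).symm
    rw [this, hfxv, inv_eq_of_mul_eq_one_right hmul]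
    exact ((v⁻¹ : Oˣ) : O).2
end

section
/- Let K be a field and let u, v : K × K → K be functions such that for all a, b ∈ K: a·u(a,b) + b·v(a,b) = 0 if and only if a = 0 and b = 0. Let X be a set and let A be a subring of the ring of all functions X → K (with pointwise operations) such that for all f, g ∈ A the functions x ↦ u(f(x),g(x)) and x ↦ v(f(x),g(x)) belong to A. Then for all f₁, …, fₙ ∈ A there exist g₁, …, gₙ ∈ A such that Z(f₁) ∩ … ∩ Z(fₙ) = Z(g₁f₁ + … + gₙfₙ). -/
theorem stmt_9 {K : Type*} [Field K] (u v : K × K → K)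
    (huv : ∀ a b : K, a * u (a, b) + b * v (a, b) = 0 ↔ a = 0 ∧ b = 0)
    {X : Type*} (A : Subring (X → K))
    (hu : ∀ f g : A, (fun x : X => u ((f : X → K) x, (g : X → K) x)) ∈ A)
    (hv : ∀ f g : A, (fun x : X => v ((f : X → K) x, (g : X → K) x)) ∈ A)
    (n : ℕ) (f : Fin n → A) :
    ∃ g : Fin n → A,
      (⋂ i, {x : X | (f i : X → K) x = 0})
        = {x : X | ((∑ i, g i * f i : A) : X → K) x = 0} := by
  induction n with
  | zero =>
    refine ⟨fun i => 0, ?_⟩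
    ext x
    simp [Set.mem_iInter]
  | succ n ih =>
    obtain ⟨g, hg⟩ := ih (fun i => f i.succ)
    set F : A := f 0 with hF
    set G : A := ∑ i, g i * f i.succ with hG
    set U : A := ⟨fun x => u ((F : X → K) x, (G : X → K) x), hu F G⟩ with hU
    set V : A := ⟨fun x => v ((F : X → K) x, (G : X → K) x), hv F G⟩ with hV
    refine ⟨Fin.cons U (fun i => V * g i), ?_⟩
    have hGzero : ∀ x : X, x ∈ ⋂ i : Fin n, {x : X | ((f i.succ : X → K)) x = 0} ↔
        (G : X → K) x = 0 := by
      intro x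
      constructor
      · intro hx
        have := hg ▸ hx
        simpa using this
      · intro hx
        rw [hg]
        simpa using hx
    have hsum : (∑ i : Fin (n+1), (Fin.cons U (fun i => V * g i) : Fin (n+1) → A) i * f i)
        = U * F + V * G := by
      rw [Fin.sum_univ_succ]
      simp only [Fin.cons_zero, Fin.cons_succ, hG, Finset.mul_sum]
      ring_nf
      rfl
    rw [hsum]
    ext x
    simp only [Set.mem_iInter, Set.mem_setOf_eq]
    have hval : ((U * F + V * G : A) : X → K) x
        = (F : X → K) x * u ((F : X → K) x, (G : X → K) x)
          + (G : X → K) x * v ((F : X → K) x, (G : X → K) x) := by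
      push_cast
      simp [hU, hV, Pi.add_apply, Pi.mul_apply]
      ring
    rw [hval, huv]
    constructor
    · intro h
      refine ⟨h 0, ?_⟩
      rw [← hGzero x]
      simp only [Set.mem_iInter, Set.mem_setOf_eq]
      intro i
      exact h i.succ
    · rintro ⟨h0, hGz⟩ i
      rcases Fin.eq_zero_or_eq_succ i with rfl | ⟨j, rfl⟩
      · exact h0
      · have := (hGzero x).mpr hGz
        simp only [Set.mem_iInter, Set.mem_setOf_eq] at this
        exact this j
end

section
/- Let K be a field and let u, v : K × K → K be functions such that for all a, b ∈ K: a·u(a,b) + b·v(a,b) = 0 if and only if a = 0 and b = 0. Let X be a nonempty set and let A be a subring of the ring of all functions X → K (with pointwise operations) such that for all f, g ∈ A the functions x ↦ u(f(x),g(x)) and x ↦ v(f(x),g(x)) belong to A, and such that every f ∈ A with no zero on X is invertible in A. Then for all f₁, …, fₙ, g ∈ A: if Z(f₁) ∩ … ∩ Z(fₙ) ⊆ Z(g), then g lies in the Jacobson radical of the ideal of A generated by f₁, …, fₙ. -/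
theorem stmt_10 {K : Type*} [Field K] (u v : K × K → K)
    (huv : ∀ a b : K, a * u (a, b) + b * v (a, b) = 0 ↔ a = 0 ∧ b = 0)
    {X : Type*} [Nonempty X] (A : Subring (X → K))
    (hu : ∀ f g : A, (fun x : X => u ((f : X → K) x, (g : X → K) x)) ∈ A)
    (hv : ∀ f g : A, (fun x : X => v ((f : X → K) x, (g : X → K) x)) ∈ A)
    (hunit : ∀ f : A, (∀ x : X, (f : X → K) x ≠ 0) → IsUnit f)
    (n : ℕ) (f : Fin n → A) (g : A)
    (hsub : (⋂ i, {x : X | (f i : X → K) x = 0}) ⊆ {x : X | (g : X → K) x = 0}) :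
    g ∈ (Ideal.span (Set.range f)).jacobson := by
  -- Step 1: construct h ∈ span (range f) with Z(h) = ⋂ Z(f i)
  have key : ∀ (m : ℕ) (F : Fin m → A), ∃ h : A, h ∈ Ideal.span (Set.range F) ∧
      ∀ x : X, (h : X → K) x = 0 ↔ ∀ i, (F i : X → K) x = 0 := by
    intro m
    induction m with
    | zero =>
        intro F
        refine ⟨0, Ideal.zero_mem _, fun x => ?_⟩
        constructor
        · intro _ i; exact absurd i.2 (by simp)
        · intro _; simp
    | succ k ih =>
        intro F
        obtain ⟨h', hmem', hz'⟩ := ih (F ∘ Fin.succ)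
        set f0 : A := F 0 with hf0
        set U : A := ⟨fun x => u ((h' : X → K) x, (f0 : X → K) x), hu h' f0⟩ with hU
        set V : A := ⟨fun x => v ((h' : X → K) x, (f0 : X → K) x), hv h' f0⟩ with hV
        refine ⟨h' * U + f0 * V, ?_, ?_⟩
        · have hsub' : Ideal.span (Set.range (F ∘ Fin.succ)) ≤ Ideal.span (Set.range F) :=
            Ideal.span_mono (by rintro _ ⟨i, rfl⟩; exact ⟨i.succ, rfl⟩)
          exact Ideal.add_mem _ (Ideal.mul_mem_right _ _ (hsub' hmem'))
            (Ideal.mul_mem_right _ _ (Ideal.subset_span ⟨0, rfl⟩))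
        · intro x
          have hcoe : ((h' * U + f0 * V : A) : X → K) x
              = (h' : X → K) x * u ((h' : X → K) x, (f0 : X → K) x)
                + (f0 : X → K) x * v ((h' : X → K) x, (f0 : X → K) x) := by
            simp [hU, hV]
          rw [hcoe, huv]
          constructor
          · rintro ⟨h1, h2⟩ i
            refine Fin.cases h2 (fun j => ?_) i
            exact (hz' x).mp h1 j
          · intro hall
            exact ⟨(hz' x).mpr fun j => hall j.succ, hall 0⟩
  obtain ⟨h, hmem, hz⟩ := key n f
  -- Step 2: Jacobson radical membership
  rw [Ideal.mem_jacobson_iff]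
  intro y
  set w : A := 1 + y * g with hw
  set U : A := ⟨fun x => u ((h : X → K) x, (w : X → K) x), hu h w⟩ with hU
  set V : A := ⟨fun x => v ((h : X → K) x, (w : X → K) x), hv h w⟩ with hV
  set k : A := h * U + w * V with hk
  have hknz : ∀ x : X, (k : X → K) x ≠ 0 := by
    intro x hkx
    have hcoe : ((k : A) : X → K) x
        = (h : X → K) x * u ((h : X → K) x, (w : X → K) x)
          + (w : X → K) x * v ((h : X → K) x, (w : X → K) x) := by
      simp [hk, hU, hV]
    rw [hcoe, huv] at hkx
    obtain ⟨hhx, hwx⟩ := hkx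
    have hfx : ∀ i, (f i : X → K) x = 0 := (hz x).mp hhx
    have hgx : (g : X → K) x = 0 := hsub (Set.mem_iInter.mpr fun i => hfx i)
    have : (w : X → K) x = 1 := by simp [hw, hgx]
    rw [this] at hwx
    exact one_ne_zero hwx
  obtain ⟨ku, hku⟩ := hunit k hknz
  refine ⟨(↑ku⁻¹ : A) * V, ?_⟩
  have hinv : (↑ku⁻¹ : A) * k = 1 := by rw [← hku]; exact ku.inv_mul
  have heq : (↑ku⁻¹ : A) * V * y * g + (↑ku⁻¹ : A) * V - 1
      = -((↑ku⁻¹ : A) * U * h) := by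
    have : (↑ku⁻¹ : A) * V * y * g + (↑ku⁻¹ : A) * V = (↑ku⁻¹ : A) * V * w := by
      rw [hw]; ring
    rw [this]
    have hwV : w * V = k - h * U := by rw [hk]; ring
    calc (↑ku⁻¹ : A) * V * w - 1 = (↑ku⁻¹ : A) * (w * V) - 1 := by ring
      _ = (↑ku⁻¹ : A) * k - (↑ku⁻¹ : A) * (h * U) - 1 := by rw [hwV]; ring
      _ = -((↑ku⁻¹ : A) * U * h) := by rw [hinv]; ring
  rw [heq]
  exact neg_mem (Ideal.mul_mem_left _ _ hmem)
end

section
/- Let K be a field equipped with a valuation v : K → Γ₀ into a linearly ordered commutative group with zero, and give K the valuation topology (and K^m the product topology). Then for every m ≥ 0 there exists a continuous function ν : K^m → K such that for every x = (x₁, …, x_m) ∈ K^m, v(ν(x)) = max(v(x₁), …, v(x_m)) (the maximum over the empty index set being 0, the least element of Γ₀). -/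
/-- In a linearly ordered commutative monoid with zero, `0` is the least element. -/
local instance instOrderBotOfLinearOrderedCommMonoidWithZero
    {Γ₀ : Type*} [LinearOrderedCommMonoidWithZero Γ₀] : OrderBot Γ₀ where
  bot := 0
  bot_le _ := zero_le'

theorem stmt_12 {K : Type*} [Field K] {Γ₀ : Type*}
    [LinearOrderedCommGroupWithZero Γ₀] [Valued K Γ₀] (m : ℕ) :
    ∃ ν : (Fin m → K) → K, Continuous ν ∧
      ∀ x : Fin m → K,
        Valued.v (ν x) = (Finset.univ : Finset (Fin m)).sup (fun i => Valued.v (x i)) := by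
  classical
  rcases Nat.eq_zero_or_pos m with hm | hm
  · subst hm
    exact ⟨fun _ => 0, continuous_const, by simp; rfl⟩
  haveI : Nonempty (Fin m) := ⟨⟨0, hm⟩⟩
  set v : Valuation K Γ₀ := Valued.v with hv
  set F : (Fin m → K) → Γ₀ := fun x => Finset.univ.sup fun i => v (x i) with hFdef
  have hne : ∀ x : Fin m → K,
      (Finset.univ.filter fun i => v (x i) = F x).Nonempty := by
    intro x
    obtain ⟨i, -, hi⟩ := Finset.exists_mem_eq_sup Finset.univ Finset.univ_nonempty
      (fun i => v (x i))
    exact ⟨i, Finset.mem_filter.mpr ⟨Finset.mem_univ i, hi.symm⟩⟩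
  set idx : (Fin m → K) → Fin m :=
    fun x => (Finset.univ.filter fun i => v (x i) = F x).min' (hne x) with hidxdef
  have hidx : ∀ x, v (x (idx x)) = F x := fun x =>
    (Finset.mem_filter.mp ((Finset.univ.filter _).min'_mem (hne x))).2
  refine ⟨fun x => x (idx x), ?_, fun x => hidx x⟩
  rw [continuous_iff_continuousAt]
  intro p
  by_cases hF : F p = 0
  · -- all coordinates of p are 0
    have hp0 : ∀ i, p i = 0 := by
      intro i
      have h1 : v (p i) ≤ F p := Finset.le_sup (f := fun i => v (p i)) (Finset.mem_univ i)
      rw [hF] at h1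
      exact v.zero_iff.mp (le_antisymm h1 zero_le')
    intro s hs
    have hνp : p (idx p) = 0 := hp0 _
    change s ∈ nhds (p (idx p)) at hs
    rw [hνp, Valued.mem_nhds_zero] at hs
    obtain ⟨γ0, hγ0⟩ := hs
    obtain ⟨γ, hγ, hγ0'⟩ : ∃ γ : Γ₀, {z | v z < γ} ⊆ s ∧
        γ = MonoidWithZeroHom.ValueGroup₀.embedding γ0.1 :=
      ⟨_, fun z hz => hγ0 ((Valuation.restrict_lt_iff_lt_embedding _).mpr hz), rfl⟩
    have hU : (⋂ i, (fun y : Fin m → K => y i) ⁻¹' {z | v z < γ}) ∈ nhds p := by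
      refine Filter.iInter_mem.mpr fun i => ?_
      refine (continuous_apply i).continuousAt ?_
      rw [hp0 i]
      exact Valued.mem_nhds_zero.mpr ⟨γ0, fun z hz => by
        rw [Set.mem_setOf_eq, hγ0']; exact (Valuation.restrict_lt_iff_lt_embedding _).mp hz⟩
    rw [Filter.mem_map]
    refine Filter.mem_of_superset hU fun y hy => ?_
    exact hγ (Set.mem_iInter.mp hy (idx y))
  · -- the index of the max is locally constant
    obtain ⟨i₀, hi₀mem⟩ := hne p
    have hi₀ : v (p i₀) = F p := (Finset.mem_filter.mp hi₀mem).2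
    have hpi₀ : v (p i₀) ≠ 0 := hi₀ ▸ hF
    set T : Finset (Fin m) := Finset.univ.filter fun i => p i ≠ 0 with hT
    have hTne : T.Nonempty :=
      ⟨i₀, Finset.mem_filter.mpr ⟨Finset.mem_univ _, fun h => hpi₀ (by rw [h, map_zero])⟩⟩
    set δ : Γ₀ := T.inf' hTne fun i => v (p i) with hδ
    have hδne : δ ≠ 0 := by
      rw [hδ]
      obtain ⟨j, hj, hje⟩ := Finset.exists_mem_eq_inf' hTne fun i => v (p i)
      rw [hje]
      exact v.ne_zero_iff.mpr (Finset.mem_filter.mp hj).2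
    have hδle : ∀ i, p i ≠ 0 → δ ≤ v (p i) := by
      intro i hi
      have hmem : i ∈ T := Finset.mem_filter.mpr ⟨Finset.mem_univ i, hi⟩
      exact Finset.inf'_le _ hmem
    have hδF : δ ≤ F p := le_trans (hδle i₀ fun h => hpi₀ (by rw [h, map_zero])) hi₀.le
    set γu : Γ₀ˣ := Units.mk0 δ hδne with hγu
    set U : Set (Fin m → K) :=
      ⋂ i, (fun y : Fin m → K => y i) ⁻¹' {z | v (z - p i) < γu} with hUdef
    have hU : U ∈ nhds p := by
      refine Filter.iInter_mem.mpr fun i => ?_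
      refine (continuous_apply i).continuousAt ?_
      obtain ⟨j, hj, hje⟩ := Finset.exists_mem_eq_inf' hTne fun i => v (p i)
      have hj0 : v.restrict (p j) ≠ 0 :=
        (Valuation.restrict_eq_zero_iff _).not.mpr (v.ne_zero_iff.mpr (Finset.mem_filter.mp hj).2)
      exact Valued.mem_nhds.mpr ⟨Units.mk0 _ hj0, fun z hz => by
        simp only [Set.mem_setOf_eq, Units.val_mk0] at hz
        show v (z - p i) < (γu : Γ₀)
        rw [hγu, Units.val_mk0, hδ, hje]
        exact (Valuation.restrict_lt_iff _).mp hz⟩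
    have hcoord : ∀ y ∈ U, ∀ i, p i ≠ 0 → v (y i) = v (p i) := by
      intro y hy i hi
      have h1 : v (y i - p i) < δ := Set.mem_iInter.mp hy i
      have h2 : v (y i - p i) < v (p i) := lt_of_lt_of_le h1 (hδle i hi)
      have : v (p i + (y i - p i)) = v (p i) := v.map_add_eq_of_lt_left h2
      rwa [add_sub_cancel] at this
    have hsmall : ∀ y ∈ U, ∀ i, p i = 0 → v (y i) < F p := by
      intro y hy i hi
      have h1 : v (y i - p i) < δ := Set.mem_iInter.mp hy i
      rw [hi, sub_zero] at h1
      exact lt_of_lt_of_le h1 hδF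
    have hFeq : ∀ y ∈ U, F y = F p := by
      intro y hy
      refine le_antisymm (Finset.sup_le fun i _ => ?_) ?_
      · by_cases hi : p i = 0
        · exact (hsmall y hy i hi).le
        · rw [hcoord y hy i hi]
          exact Finset.le_sup (f := fun i => v (p i)) (Finset.mem_univ i)
      · have : v (y i₀) = F p := by
          rw [hcoord y hy i₀ fun h => hpi₀ (by rw [h, map_zero]), hi₀]
        exact this ▸ Finset.le_sup (f := fun i => v (y i)) (Finset.mem_univ i₀)
    have hidxeq : ∀ y ∈ U, idx y = idx p := by
      intro y hy
      have hset : (Finset.univ.filter fun i => v (y i) = F y) =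
          (Finset.univ.filter fun i => v (p i) = F p) := by
        ext i
        simp only [Finset.mem_filter, Finset.mem_univ, true_and]
        rw [hFeq y hy]
        by_cases hi : p i = 0
        · constructor
          · intro h; exact absurd h (ne_of_lt (hsmall y hy i hi))
          · intro h
            rw [hi, map_zero] at h
            exact absurd h.symm hF
        · rw [hcoord y hy i hi]
      simp only [hidxdef]
      congr 1
    have hev : (fun y : Fin m → K => y (idx y)) =ᶠ[nhds p] fun y => y (idx p) :=
      Filter.eventuallyEq_of_mem hU fun y hy => by rw [hidxeq y hy]
    exact ((continuous_apply (idx p)).continuousAt).congr hev.symm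
end

section
/- Let K be a topological field whose topology is T1, let X be a topological space, and let A be a set of continuous functions X → K such that for every open set U ⊆ X and every x ∈ U there is h ∈ A with h(x) ≠ 0 and h = 0 on X ∖ U. Let p ∈ A have a unique zero p₀ ∈ X and let s ∈ A satisfy s(p₀) = 0. Then p₀ is an isolated point of Z(s) if and only if there exists u ∈ A such that Z(s) ⊆ {p₀} ∪ Z(u) and Z(s) ⊄ Z(u). -/
theorem stmt_14 {K : Type*} [Field K] [TopologicalSpace K] [IsTopologicalDivisionRing K]
    [T1Space K] {X : Type*} [TopologicalSpace X] (A : Set (X → K))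
    (hcont : ∀ f ∈ A, Continuous f)
    (hbump : ∀ U : Set X, IsOpen U → ∀ x ∈ U,
      ∃ h ∈ A, h x ≠ 0 ∧ ∀ y ∉ U, h y = 0)
    (p : X → K) (hp : p ∈ A) (p₀ : X) (hpzero : ∀ x, p x = 0 ↔ x = p₀)
    (s : X → K) (hs : s ∈ A) (hsp₀ : s p₀ = 0) :
    (∃ U : Set X, IsOpen U ∧ U ∩ {x | s x = 0} = {p₀})
      ↔ ∃ u ∈ A, {x | s x = 0} ⊆ insert p₀ {x | u x = 0}
          ∧ ¬ {x | s x = 0} ⊆ {x | u x = 0} := by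
  constructor
  · rintro ⟨U, hU, hUs⟩
    have hp₀U : p₀ ∈ U := by
      have : p₀ ∈ U ∩ {x | s x = 0} := hUs ▸ rfl
      exact this.1
    obtain ⟨h, hA, hne, hzero⟩ := hbump U hU p₀ hp₀U
    refine ⟨h, hA, ?_, ?_⟩
    · intro x hx
      by_cases hxp : x = p₀
      · exact Or.inl hxp
      · right
        by_contra hhx
        have hxU : x ∈ U := by
          by_contra hxU
          exact hhx (hzero x hxU)
        have : x ∈ ({p₀} : Set X) := hUs ▸ ⟨hxU, hx⟩
        exact hxp this
    · intro hsub
      exact hne (hsub hsp₀)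
  · rintro ⟨u, huA, hsub, hnsub⟩
    have hup₀ : u p₀ ≠ 0 := by
      obtain ⟨x, hxs, hxu⟩ := Set.not_subset.mp hnsub
      rcases hsub hxs with h | h
      · exact h ▸ hxu
      · exact absurd h hxu
    refine ⟨{x | u x ≠ 0}, (isOpen_compl_singleton.preimage (hcont u huA) : _), ?_⟩
    ext x
    simp only [Set.mem_inter_iff, Set.mem_setOf_eq, Set.mem_singleton_iff]
    constructor
    · rintro ⟨hux, hsx⟩
      rcases hsub hsx with h | h
      · exact h
      · exact absurd h hux
    · rintro rfl
      exact ⟨hup₀, hsp₀⟩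
end

section
/- Let (G,+,≤) be an abelian group equipped with a total preorder ≤ compatible with addition (x ≤ y implies x + z ≤ y + z for all z), and let τ ∈ G with 0 < τ. If T ⊆ G is a finite τℤ-chunk of G, then there exists n ∈ ℕ such that T = {k·τ : k ∈ ℤ, −n ≤ k ≤ n}. -/
/-- `T` is a `τℤ`-chunk of `G` with respect to the total preorder `le`. -/
def IsChunk {G : Type*} [AddCommGroup G] (le : G → G → Prop) (τ : G) (T : Set G) : Prop :=
  τ ∈ T ∧
  (∀ α ∈ T, -α ∈ T) ∧
  (∀ α ∈ T, ∀ β ∈ T, ∀ γ ∈ T, le (-γ) (α + β) → le (α + β) γ → α + β ∈ T) ∧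
  (∀ γ ∈ T, ∀ u : G, le (-γ) u → le u γ →
    ∃! ξ : G, ξ ∈ T ∧ le ξ u ∧ le u (ξ + τ) ∧ ¬ le (ξ + τ) u)

theorem aux_finset_top {α : Type*} (le : α → α → Prop)
    (htotal : ∀ a b, le a b ∨ le b a) (htrans : ∀ a b c, le a b → le b c → le a c) :
    ∀ s : Finset α, s.Nonempty → ∃ m ∈ s, ∀ a ∈ s, le a m := by
  classical
  intro s hs
  induction hs using Finset.Nonempty.cons_induction with
  | singleton a => exact ⟨a, by simp, by
      intro x hx
      simp only [Finset.mem_singleton] at hx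
      subst hx; exact (htotal x x).elim id id⟩
  | cons a s h hs ih =>
    obtain ⟨m, hm, hmax⟩ := ih
    rcases htotal a m with hle | hle
    · refine ⟨m, Finset.mem_cons_of_mem hm, ?_⟩
      intro x hx
      rcases Finset.mem_cons.1 hx with rfl | hx
      · exact hle
      · exact hmax x hx
    · refine ⟨a, Finset.mem_cons_self a s, ?_⟩
      intro x hx
      rcases Finset.mem_cons.1 hx with rfl | hx
      · exact (htotal x x).elim id id
      · exact htrans x m a (hmax x hx) hle

theorem stmt_15 {G : Type*} [AddCommGroup G] (le : G → G → Prop)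
    (htotal : ∀ a b : G, le a b ∨ le b a)
    (htrans : ∀ a b c : G, le a b → le b c → le a c)
    (hadd : ∀ a b z : G, le a b → le (a + z) (b + z))
    (τ : G) (hτ : le 0 τ ∧ ¬ le τ 0)
    (T : Set G) (hfin : T.Finite) (hchunk : IsChunk le τ T) :
    ∃ n : ℕ, T = {g : G | ∃ k : ℤ, -(n : ℤ) ≤ k ∧ k ≤ (n : ℤ) ∧ g = k • τ} := by
  classical
  obtain ⟨hτT, hneg, hsum, hex⟩ := hchunk
  have hrefl : ∀ a : G, le a a := fun a => (htotal a a).elim id id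
  -- positivity of natural multiples
  have hposN : ∀ j : ℕ, le 0 ((j : ℤ) • τ) := by
    intro j
    induction j with
    | zero => simpa using hrefl 0
    | succ j ih =>
      have h1 := hadd 0 τ ((j : ℤ) • τ) hτ.1
      rw [zero_add, show τ + (j : ℤ) • τ = ((j : ℤ) + 1) • τ by
        rw [add_zsmul, one_zsmul, add_comm]] at h1
      have : ((j + 1 : ℕ) : ℤ) = (j : ℤ) + 1 := by push_cast; ring
      rw [this]
      exact htrans _ _ _ ih h1
  have hpos : ∀ k : ℤ, 0 ≤ k → le 0 (k • τ) := by
    intro k hk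
    have := hposN k.toNat
    rwa [Int.toNat_of_nonneg hk] at this
  have hmono : ∀ k m : ℤ, k ≤ m → le (k • τ) (m • τ) := by
    intro k m hkm
    have h1 := hadd 0 ((m - k) • τ) (k • τ) (hpos _ (by omega))
    rw [zero_add, show (m - k) • τ + k • τ = m • τ by rw [← add_zsmul]; ring_nf] at h1
    exact h1
  have hstrict : ∀ k m : ℤ, k < m → ¬ le (m • τ) (k • τ) := by
    intro k m hkm hle
    have h1 := hadd (m • τ) (k • τ) (-(k • τ)) hle
    rw [add_neg_cancel, show m • τ + -(k • τ) = (m - k) • τ by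
      rw [sub_eq_add_neg, add_zsmul, neg_zsmul]] at h1
    have h2 : le τ ((m - k) • τ) := by
      have := hmono 1 (m - k) (by omega)
      rwa [one_zsmul] at this
    exact hτ.2 (htrans _ _ _ h2 h1)
  have hinj : Function.Injective (fun k : ℤ => k • τ) := by
    intro k m h
    by_contra hne
    have h' : k • τ = m • τ := h
    rcases lt_or_gt_of_ne hne with hlt | hlt
    · exact hstrict k m hlt (by rw [h']; exact hrefl _)
    · exact hstrict m k hlt (by rw [h']; exact hrefl _)
  -- 0 ∈ T
  have hnegτ0 : le (-τ) 0 := by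
    have := hadd 0 τ (-τ) hτ.1
    rwa [zero_add, add_neg_cancel] at this
  have h0T : (0 : G) ∈ T := by
    have h := hsum τ hτT (-τ) (hneg τ hτT) τ hτT
    rw [add_neg_cancel] at h
    exact h hnegτ0 hτ.1
  -- top element of T
  obtain ⟨γ₀, hγ₀T, hγtop⟩ : ∃ m ∈ T, ∀ a ∈ T, le a m := by
    obtain ⟨m, hm, hmax⟩ := aux_finset_top le htotal htrans hfin.toFinset
      ⟨τ, hfin.mem_toFinset.2 hτT⟩
    exact ⟨m, hfin.mem_toFinset.1 hm, fun a ha => hmax a (hfin.mem_toFinset.2 ha)⟩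
  have hlow : ∀ u ∈ T, le (-γ₀) u := by
    intro u hu
    have h1 := hγtop (-u) (hneg u hu)
    have h2 := hadd (-u) γ₀ (u - γ₀) h1
    rwa [show -u + (u - γ₀) = -γ₀ by abel, show γ₀ + (u - γ₀) = u by abel] at h2
  -- natural multiples bounded by γ₀ are in T
  have hmemNat : ∀ j : ℕ, le ((j : ℤ) • τ) γ₀ → ((j : ℤ) • τ) ∈ T := by
    intro j
    induction j with
    | zero => intro _; simpa using h0T
    | succ j ih =>
      intro hb
      have hcast : ((j + 1 : ℕ) : ℤ) = (j : ℤ) + 1 := by push_cast; ring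
      rw [hcast] at hb ⊢
      have hjle : le ((j : ℤ) • τ) (((j : ℤ) + 1) • τ) := hmono _ _ (by omega)
      have hjT : ((j : ℤ) • τ) ∈ T := ih (htrans _ _ _ hjle hb)
      have h := hsum _ hjT τ hτT γ₀ hγ₀T
      rw [show (j : ℤ) • τ + τ = ((j : ℤ) + 1) • τ by rw [add_zsmul, one_zsmul]] at h
      exact h (htrans _ _ _ (hlow 0 h0T) (hpos _ (by omega))) hb
  -- key lemma: nonnegative elements of T are natural multiples of τ
  have hA : ∀ u ∈ T, le 0 u → ∃ k : ℕ, u = (k : ℤ) • τ := by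
    intro u hu h0u
    set K : Set ℕ := {j : ℕ | le ((j : ℤ) • τ) u} with hK
    have hKT : ∀ j ∈ K, ((j : ℤ) • τ) ∈ T := fun j hj =>
      hmemNat j (htrans _ _ _ hj (hγtop u hu))
    have hKfin : K.Finite := by
      have hinj' : Function.Injective (fun j : ℕ => (j : ℤ) • τ) := by
        intro a b h
        exact Nat.cast_injective (hinj h)
      exact Set.Finite.subset (hfin.preimage hinj'.injOn) hKT
    have hKne : K.Nonempty := ⟨0, by
      simp only [hK, Set.mem_setOf_eq, Nat.cast_zero, zero_zsmul]; exact h0u⟩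
    set F := hKfin.toFinset with hF
    have hFne : F.Nonempty := ⟨hKne.choose, hKfin.mem_toFinset.2 hKne.choose_spec⟩
    set k := F.max' hFne with hk
    have hkK : k ∈ K := hKfin.mem_toFinset.1 (F.max'_mem hFne)
    have hknot : (k + 1) ∉ K := by
      intro hmem
      have := F.le_max' (k + 1) (hKfin.mem_toFinset.2 hmem)
      omega
    have hnot : ¬ le ((k : ℤ) • τ + τ) u := by
      intro h
      apply hknot
      show le (((k + 1 : ℕ) : ℤ) • τ) u
      rwa [show ((k + 1 : ℕ) : ℤ) = (k : ℤ) + 1 by push_cast; ring, add_zsmul, one_zsmul]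
    obtain ⟨ξ, hξ, huniq⟩ := hex γ₀ hγ₀T u (hlow u hu) (hγtop u hu)
    have hw1 : u ∈ T ∧ le u u ∧ le u (u + τ) ∧ ¬ le (u + τ) u := by
      refine ⟨hu, hrefl u, ?_, ?_⟩
      · have := hadd 0 τ u hτ.1
        rwa [zero_add, add_comm τ u] at this
      · intro h
        have := hadd (u + τ) u (-u) h
        rw [add_neg_cancel, show u + τ + -u = τ by abel] at this
        exact hτ.2 this
    have hw2 : ((k : ℤ) • τ) ∈ T ∧ le ((k : ℤ) • τ) u ∧ le u ((k : ℤ) • τ + τ) ∧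
        ¬ le ((k : ℤ) • τ + τ) u := by
      refine ⟨hKT k hkK, hkK, ?_, hnot⟩
      rcases htotal u ((k : ℤ) • τ + τ) with h | h
      · exact h
      · exact absurd h hnot
    exact ⟨k, (huniq u hw1).trans (huniq _ hw2).symm⟩
  -- every element of T is an integer multiple of τ
  have hmulZ : ∀ u ∈ T, ∃ k : ℤ, u = k • τ := by
    intro u hu
    rcases htotal 0 u with h | h
    · obtain ⟨k, hk⟩ := hA u hu h
      exact ⟨k, hk⟩
    · have h1 : le 0 (-u) := by
        have := hadd u 0 (-u) h
        rwa [zero_add, add_neg_cancel] at this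
      obtain ⟨k, hk⟩ := hA (-u) (hneg u hu) h1
      refine ⟨-(k : ℤ), ?_⟩
      rw [neg_zsmul, ← hk, neg_neg]
    -- the index set
  set I : Set ℤ := {k : ℤ | k • τ ∈ T} with hI
  have hIfin : I.Finite := hfin.preimage hinj.injOn
  have h1I : (1 : ℤ) ∈ I := by simpa [hI, one_zsmul] using hτT
  have hIne : I.Nonempty := ⟨1, h1I⟩
  set FI := hIfin.toFinset with hFI
  have hFIne : FI.Nonempty := ⟨1, hIfin.mem_toFinset.2 h1I⟩
  set m := FI.max' hFIne with hm
  have hmI : m ∈ I := hIfin.mem_toFinset.1 (FI.max'_mem hFIne)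
  have h1m : (1 : ℤ) ≤ m := FI.le_max' 1 (hIfin.mem_toFinset.2 h1I)
  have hmT : m • τ ∈ T := hmI
  refine ⟨m.toNat, ?_⟩
  have hcast : ((m.toNat : ℕ) : ℤ) = m := Int.toNat_of_nonneg (by omega)
  ext g
  simp only [Set.mem_setOf_eq, hcast]
  constructor
  · intro hg
    obtain ⟨k, rfl⟩ := hmulZ g hg
    have hkI : k ∈ I := hg
    have hk1 : k ≤ m := FI.le_max' k (hIfin.mem_toFinset.2 hkI)
    have hnkI : (-k) ∈ I := by
      show (-k) • τ ∈ T
      rw [neg_zsmul]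
      exact hneg _ hg
    have hk2 : -k ≤ m := FI.le_max' (-k) (hIfin.mem_toFinset.2 hnkI)
    exact ⟨k, by omega, hk1, rfl⟩
  · rintro ⟨k, hk1, hk2, rfl⟩
    have hmemle : ∀ k : ℤ, 0 ≤ k → k ≤ m → k • τ ∈ T := by
      intro k h0k hkm
      have hb : le (k • τ) γ₀ := htrans _ _ _ (hmono k m hkm) (hγtop _ hmT)
      have := hmemNat k.toNat (by rwa [Int.toNat_of_nonneg h0k])
      rwa [Int.toNat_of_nonneg h0k] at this
    rcases le_total 0 k with h | h
    · exact hmemle k h hk2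
    · have : (-k) • τ ∈ T := hmemle (-k) (by omega) (by omega)
      have h2 := hneg _ this
      rwa [neg_zsmul, neg_neg] at h2
end

section
/- Let K be a normed field, X a topological space, p₀ ∈ X, and p : X → K a continuous function whose zero set is exactly {p₀}. Let S₁, …, S_k be pairwise disjoint subsets of X ∖ {p₀}, each with p₀ in its closure, and let δ₁, …, δ_k : X ∖ {p₀} → K be continuous bounded functions such that for each i, δᵢ = 1 on Sᵢ and δᵢ = 0 on S_j for every j ≠ i. Let l₁, …, l_k ∈ K and define f : X → K by f(x) = (l₁δ₁(x) + … + l_kδ_k(x))·p(x) for x ≠ p₀ and f(p₀) = 0. Then: (i) f is continuous on X; (ii) f(x) = lᵢ·p(x) for every x ∈ Sᵢ; and (iii) with S = S₁ ∪ … ∪ S_k, the set {l ∈ K : (p₀, l) lies in the closure in X × K of the graph {(x, f(x)/p(x)) : x ∈ S}} is exactly {l₁, …, l_k}. -/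
open Classical in

theorem stmt_16 {K : Type*} [NormedField K] {X : Type*} [TopologicalSpace X]
    (p₀ : X) (p : X → K) (hp_cont : Continuous p) (hp : ∀ x, p x = 0 ↔ x = p₀)
    (k : ℕ) (S : Fin k → Set X)
    (hdisj : ∀ i j, i ≠ j → Disjoint (S i) (S j))
    (hSsub : ∀ i, p₀ ∉ S i)
    (hScl : ∀ i, p₀ ∈ closure (S i))
    (δ : Fin k → X → K)
    (hδcont : ∀ i, ContinuousOn (δ i) {p₀}ᶜ)
    (hδbd : ∀ i, ∃ M : ℝ, ∀ x : X, x ≠ p₀ → ‖δ i x‖ ≤ M)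
    (hδ1 : ∀ i, ∀ x ∈ S i, δ i x = 1)
    (hδ0 : ∀ i j, i ≠ j → ∀ x ∈ S j, δ i x = 0)
    (l : Fin k → K) (f : X → K)
    (hf : ∀ x : X, f x = if x = p₀ then 0 else (∑ i, l i * δ i x) * p x) :
    Continuous f ∧
      (∀ i, ∀ x ∈ S i, f x = l i * p x) ∧
      {l' : K | (p₀, l') ∈ closure ((fun x => (x, f x / p x)) '' (⋃ i, S i))}
        = Set.range l := by
  -- {p₀} is closed since it is the preimage of {0} under the continuous p
  have hsingl : ({p₀} : Set X) = p ⁻¹' {0} := by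
    ext y; simp [hp]
  have hclosed : IsClosed ({p₀} : Set X) := hsingl ▸ (isClosed_singleton.preimage hp_cont)
  have hopen : IsOpen ({p₀}ᶜ : Set X) := hclosed.isOpen_compl
  -- part (ii)
  have hii : ∀ i, ∀ x ∈ S i, f x = l i * p x := by
    intro i x hx
    have hxne : x ≠ p₀ := fun h => hSsub i (h ▸ hx)
    rw [hf x, if_neg hxne]
    congr 1
    rw [Finset.sum_eq_single i]
    · rw [hδ1 i x hx, mul_one]
    · intro j _ hj
      rw [hδ0 j i hj x hx, mul_zero]
    · intro h; exact absurd (Finset.mem_univ i) h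
  -- part (i)
  have hcont : Continuous f := by
    choose M hM using hδbd
    set C : ℝ := ∑ i, ‖l i‖ * max (M i) 0 with hC
    have hbound : ∀ x : X, ‖f x‖ ≤ C * ‖p x‖ := by
      intro x
      by_cases hx : x = p₀
      · simp [hf, hx, (hp p₀).mpr rfl]
      · rw [hf x, if_neg hx, norm_mul]
        apply mul_le_mul_of_nonneg_right _ (norm_nonneg _)
        calc ‖∑ i, l i * δ i x‖ ≤ ∑ i, ‖l i * δ i x‖ := norm_sum_le _ _
          _ ≤ C := by
            apply Finset.sum_le_sum
            intro i _
            rw [norm_mul]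
            exact mul_le_mul_of_nonneg_left (le_max_of_le_left (hM i x hx))
              (norm_nonneg _)
    rw [continuous_iff_continuousAt]
    intro x
    by_cases hx : x = p₀
    · subst hx
      have h0 : f x = 0 := by rw [hf x]; simp
      rw [ContinuousAt, h0]
      apply squeeze_zero_norm hbound
      have h1 : Filter.Tendsto (fun y => C * ‖p y‖) (nhds x) (nhds (C * ‖p x‖)) :=
        (continuous_const.mul hp_cont.norm).tendsto x
      simpa [(hp x).mpr rfl] using h1
    · have hg : ContinuousOn (fun y => (∑ i, l i * δ i y) * p y) {p₀}ᶜ := by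
        apply ContinuousOn.mul _ hp_cont.continuousOn
        exact continuousOn_finset_sum _ fun i _ => continuousOn_const.mul (hδcont i)
      have hx' : x ∈ ({p₀}ᶜ : Set X) := hx
      have h2 := hg.continuousAt (hopen.mem_nhds hx')
      apply h2.congr
      filter_upwards [hopen.mem_nhds hx'] with y hy
      have hy' : y ≠ p₀ := hy
      exact (by rw [hf y, if_neg hy'] : f y = _).symm
  refine ⟨hcont, hii, ?_⟩
  -- part (iii)
  have hval : ∀ i, ∀ x ∈ S i, f x / p x = l i := by
    intro i x hx
    have hxne : x ≠ p₀ := fun h => hSsub i (h ▸ hx)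
    have hpx : p x ≠ 0 := fun h => hxne ((hp x).mp h)
    rw [hii i x hx, mul_div_assoc, div_self hpx, mul_one]
  have himg : (fun x => (x, f x / p x)) '' (⋃ i, S i) = ⋃ i, S i ×ˢ ({l i} : Set K) := by
    rw [Set.image_iUnion]
    apply Set.iUnion_congr
    intro i
    ext ⟨x, y⟩
    simp only [Set.mem_image, Set.mem_prod, Set.mem_singleton_iff]
    constructor
    · rintro ⟨z, hz, heq⟩
      injection heq with h1 h2
      subst h1; subst h2
      exact ⟨hz, hval i z hz⟩
    · rintro ⟨hx, rfl⟩
      exact ⟨x, hx, by rw [hval i x hx]⟩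
  rw [himg, closure_iUnion_of_finite]
  ext l'
  simp only [Set.mem_setOf_eq, Set.mem_iUnion, Set.mem_range]
  constructor
  · rintro ⟨i, hi⟩
    rw [closure_prod_eq] at hi
    have h3 := hi.2
    rw [closure_singleton] at h3
    exact ⟨i, h3.symm⟩
  · rintro ⟨i, rfl⟩
    exact ⟨i, by rw [closure_prod_eq, closure_singleton]; exact ⟨hScl i, rfl⟩⟩
end

section
/- Let r ≥ 2 and k ≥ 1 be integers, let U ⊆ ℝ^r be open and let p₀ ∈ U. Then there exist continuous functions s₁, …, s_k : U → ℝ and continuous bounded functions δ₁, …, δ_k : U ∖ {p₀} → ℝ such that, setting Sᵢ = {x ∈ U : sᵢ(x) = 0} ∖ {p₀}: (1) the sets S₁, …, S_k are pairwise disjoint; (2) for each i, sᵢ(p₀) = 0 and p₀ lies in the closure of Sᵢ (i.e. p₀ is a non-isolated zero of sᵢ); (3) for each i, δᵢ = 1 on Sᵢ and δᵢ = 0 on S_j for every j ≠ i. -/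
open Real Filter

lemma sin_min_lemma {a c : ℝ} (ha : 0 ≤ a) (ha2 : a ≤ π / 2)
    (h1 : a ≤ c) (h2 : c ≤ π - a) : Real.sin a ≤ Real.sin c := by
  rcases le_or_gt c (π / 2) with h | h
  · exact Real.sin_le_sin_of_le_of_le_pi_div_two (by linarith) h h1
  · rw [← Real.sin_pi_sub c]
    exact Real.sin_le_sin_of_le_of_le_pi_div_two (by linarith) (by linarith) (by linarith)

lemma sin_zero_char (k : ℕ) (hk : (k:ℝ) ≠ 0) (t c : ℝ) :
    Real.sin (π * (t - c) / k) = 0 ↔ ∃ m : ℤ, t = c + k * m := by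
  rw [Real.sin_eq_zero_iff]
  constructor
  · rintro ⟨n, hn⟩
    refine ⟨n, ?_⟩
    have hπ := Real.pi_ne_zero
    field_simp at hn
    nlinarith [hn, Real.pi_pos]
  · rintro ⟨m, hm⟩
    refine ⟨m, ?_⟩
    rw [hm]
    field_simp
    ring

theorem stmt_17 (r k : ℕ) (hr : 2 ≤ r) (hk : 1 ≤ k)
    (U : Set (Fin r → ℝ)) (hU : IsOpen U) (p₀ : Fin r → ℝ) (hp₀ : p₀ ∈ U) :
    ∃ s δ : Fin k → ((Fin r → ℝ) → ℝ),
      (∀ i, ContinuousOn (s i) U) ∧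
      (∀ i, ContinuousOn (δ i) (U \ {p₀})) ∧
      (∀ i, ∃ M : ℝ, ∀ x ∈ U \ {p₀}, |δ i x| ≤ M) ∧
      (∀ i j, i ≠ j →
        ({x | x ∈ U ∧ s i x = 0} \ {p₀}) ∩ ({x | x ∈ U ∧ s j x = 0} \ {p₀}) = ∅) ∧
      (∀ i, s i p₀ = 0 ∧ p₀ ∈ closure ({x | x ∈ U ∧ s i x = 0} \ {p₀})) ∧
      (∀ i, (∀ x ∈ ({x | x ∈ U ∧ s i x = 0} \ {p₀}), δ i x = 1) ∧
        ∀ j, j ≠ i → ∀ x ∈ ({x | x ∈ U ∧ s j x = 0} \ {p₀}), δ i x = 0) := by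
  have hkpos : (0:ℝ) < k := by exact_mod_cast hk
  have hk1 : (1:ℝ) ≤ (k:ℝ) := by exact_mod_cast hk
  have hk0 : (k:ℝ) ≠ 0 := ne_of_gt hkpos
  have hπ := Real.pi_pos
  set θ : Fin k → (Fin r → ℝ) → ℝ :=
    fun i x => π * ((dist x p₀)⁻¹ - (i:ℝ)) / k with hθ
  refine ⟨fun i x => dist x p₀ * Real.sin (θ i x),
          fun i x => max 0 (1 - |Real.sin (θ i x)| / Real.sin (π / k)),
          ?_, ?_, ?_, ?_, ?_, ?_⟩
  · -- continuity of s
    intro i x hx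
    by_cases hx0 : x = p₀
    · rw [hx0]
      have hg : Tendsto (fun y => dist y p₀) (nhdsWithin p₀ U) (nhds 0) := by
        have h1 : Tendsto (fun y => dist y p₀) (nhds p₀) (nhds 0) := by
          simpa using (continuous_id.dist (continuous_const (y := p₀))).tendsto p₀
        exact h1.mono_left nhdsWithin_le_nhds
      have key : Tendsto (fun y => dist y p₀ * Real.sin (θ i y)) (nhdsWithin p₀ U)
          (nhds 0) := by
        apply squeeze_zero_norm _ hg
        intro y
        rw [Real.norm_eq_abs, abs_mul, abs_dist]
        exact mul_le_of_le_one_right dist_nonneg (Real.abs_sin_le_one _)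
      have h0 : dist p₀ p₀ * Real.sin (θ i p₀) = 0 := by simp
      unfold ContinuousWithinAt
      simpa [h0] using key
    · apply ContinuousAt.continuousWithinAt
      have hd : dist x p₀ ≠ 0 := by simpa [dist_eq_zero] using hx0
      have hdc : ContinuousAt (fun y => dist y p₀) x :=
        (continuous_id.dist continuous_const).continuousAt
      exact hdc.mul (Real.continuous_sin.continuousAt.comp
        ((((hdc.inv₀ hd).sub continuousAt_const).const_mul π).div_const _))
  · -- continuity of δ
    intro i x hx
    apply ContinuousAt.continuousWithinAt
    have hd : dist x p₀ ≠ 0 := by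
      simp only [Set.mem_diff, Set.mem_singleton_iff] at hx
      simpa [dist_eq_zero] using hx.2
    have hdc : ContinuousAt (fun y => dist y p₀) x :=
      (continuous_id.dist continuous_const).continuousAt
    have hθc : ContinuousAt (fun y => θ i y) x :=
      (((hdc.inv₀ hd).sub continuousAt_const).const_mul π).div_const _
    exact continuousAt_const.max ((continuousAt_const.sub
      (((Real.continuous_sin.continuousAt.comp hθc).abs).div_const _)))
  · -- boundedness
    intro i
    refine ⟨1, fun x hx => ?_⟩
    have hq : 0 ≤ |Real.sin (θ i x)| / Real.sin (π / k) := by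
      apply div_nonneg (abs_nonneg _)
      apply Real.sin_nonneg_of_nonneg_of_le_pi
      · positivity
      · rw [div_le_iff₀ hkpos]; nlinarith [mul_nonneg hπ.le (sub_nonneg.2 hk1)]
    rw [abs_le]
    refine ⟨?_, ?_⟩
    · have := le_max_left (0:ℝ) (1 - |Real.sin (θ i x)| / Real.sin (π / k)); linarith
    · apply max_le (by norm_num); linarith
  · -- disjointness
    intro i j hij
    ext x
    simp only [Set.mem_inter_iff, Set.mem_diff, Set.mem_setOf_eq, Set.mem_singleton_iff,
      Set.mem_empty_iff_false, iff_false]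
    rintro ⟨⟨⟨hxU, hsi⟩, hxp⟩, ⟨⟨-, hsj⟩, -⟩⟩
    have hd : dist x p₀ ≠ 0 := fun h => hxp (by rwa [dist_eq_zero] at h)
    have h1 : Real.sin (θ i x) = 0 := (mul_eq_zero.1 hsi).resolve_left hd
    have h2 : Real.sin (θ j x) = 0 := (mul_eq_zero.1 hsj).resolve_left hd
    obtain ⟨m, hm⟩ := (sin_zero_char k hk0 _ _).1 h1
    obtain ⟨m', hm'⟩ := (sin_zero_char k hk0 _ _).1 h2
    have hcast : ((i:ℤ) + k * m : ℝ) = ((j:ℤ) + k * m' : ℝ) := by push_cast; linarith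
    have hz : (i:ℤ) + k * m = (j:ℤ) + k * m' := by exact_mod_cast hcast
    have hdvd : (k:ℤ) ∣ ((i:ℤ) - (j:ℤ)) := ⟨m' - m, by linarith⟩
    have h3 : ((i:ℤ) - (j:ℤ)) = 0 := by
      apply Int.eq_zero_of_abs_lt_dvd hdvd
      have hi := i.isLt
      have hj := j.isLt
      rw [abs_lt]
      omega
    have : (i:ℕ) = (j:ℕ) := by omega
    exact hij (Fin.ext this)
  · -- p₀ is a non-isolated zero
    intro i
    have hne : Nonempty (Fin r) := ⟨⟨0, by omega⟩⟩
    refine ⟨by simp, ?_⟩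
    set c : ℕ → ℝ := fun n => ((i:ℝ) + k * (n + 1))⁻¹ with hc
    have hden : ∀ n : ℕ, (0:ℝ) < (i:ℝ) + k * (n + 1) := by
      intro n
      have h2 : (0:ℝ) ≤ (i:ℝ) := by positivity
      nlinarith [Nat.cast_nonneg (α := ℝ) n]
    have hcpos : ∀ n, 0 < c n := fun n => inv_pos.2 (hden n)
    set xs : ℕ → (Fin r → ℝ) := fun n => p₀ + c n • (fun _ => (1:ℝ)) with hxs
    have hdist : ∀ n, dist (xs n) p₀ = c n := by
      intro n
      rw [dist_eq_norm]
      have hsub : xs n - p₀ = c n • (fun _ => (1:ℝ)) := by rw [hxs]; exact add_sub_cancel_left _ _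
      rw [hsub, norm_smul, pi_norm_const (1:ℝ)]
      simp [abs_of_pos (hcpos n)]
    have htend : Tendsto (fun n => dist (xs n) p₀) atTop (nhds 0) := by
      simp only [hdist]
      apply squeeze_zero (fun n => (hcpos n).le) _ tendsto_one_div_add_atTop_nhds_zero_nat
      intro n
      rw [hc]
      have h1 : ((n:ℝ) + 1) ≤ (i:ℝ) + k * (n + 1) := by
        have h2 : (0:ℝ) ≤ (i:ℝ) := by positivity
        nlinarith [Nat.cast_nonneg (α := ℝ) n]
      calc ((i:ℝ) + k * (n + 1))⁻¹ = 1 / ((i:ℝ) + k * (n + 1)) := by rw [one_div]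
        _ ≤ 1 / ((n:ℝ) + 1) := one_div_le_one_div_of_le (by positivity) h1
    have htendx : Tendsto xs atTop (nhds p₀) := tendsto_iff_dist_tendsto_zero.2 htend
    apply mem_closure_of_tendsto htendx
    obtain ⟨ε, hε, hball⟩ := Metric.isOpen_iff.1 hU p₀ hp₀
    have hev : ∀ᶠ n in atTop, dist (xs n) p₀ < ε :=
      htend.eventually (eventually_lt_nhds hε)
    filter_upwards [hev] with n hn
    refine ⟨⟨hball hn, ?_⟩, ?_⟩
    · apply mul_eq_zero_of_right
      apply (sin_zero_char k hk0 _ _).2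
      refine ⟨(n:ℤ) + 1, ?_⟩
      rw [hdist n, hc, inv_inv]
      push_cast
      ring
    · simp only [Set.mem_singleton_iff]
      intro h
      have := hdist n
      rw [h, dist_self] at this
      exact absurd this.symm (hcpos n).ne'
  · -- δ values
    intro i
    constructor
    · rintro x ⟨⟨hxU, hs⟩, hxp⟩
      simp only [Set.mem_singleton_iff] at hxp
      have hd : dist x p₀ ≠ 0 := fun h => hxp (by rwa [dist_eq_zero] at h)
      have hsin : Real.sin (θ i x) = 0 := (mul_eq_zero.1 hs).resolve_left hd
      show max 0 (1 - |Real.sin (θ i x)| / Real.sin (π / k)) = 1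
      rw [hsin]
      simp
    · rintro j hji x ⟨⟨hxU, hs⟩, hxp⟩
      simp only [Set.mem_singleton_iff] at hxp
      have hd : dist x p₀ ≠ 0 := fun h => hxp (by rwa [dist_eq_zero] at h)
      have hsin : Real.sin (θ j x) = 0 := (mul_eq_zero.1 hs).resolve_left hd
      obtain ⟨m, hm⟩ := (sin_zero_char k hk0 _ _).1 hsin
      have hvne : (j:ℕ) ≠ (i:ℕ) := fun h => hji (Fin.ext h)
      have hk2 : 2 ≤ k := by have := i.isLt; have := j.isLt; omega
      have h2k : (2:ℝ) ≤ (k:ℝ) := by exact_mod_cast hk2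
      -- rewrite θ i x
      have hθi : θ i x = π * ((j:ℝ) - (i:ℝ)) / k + (m:ℝ) * π := by
        rw [hθ]
        simp only
        rw [hm]
        field_simp
        ring
      have habs : |Real.sin (θ i x)| = |Real.sin (π * ((j:ℝ) - (i:ℝ)) / k)| := by
        have hpm : |(-1:ℝ)^m| = 1 := by
          rcases Int.even_or_odd m with h | h
          · rw [h.neg_one_zpow]; norm_num
          · rw [h.neg_one_zpow]; norm_num
        rw [hθi, Real.sin_add_int_mul_pi, abs_mul, hpm, one_mul]
      -- key bound
      have main : ∀ a b : ℕ, a < b → b < k → Real.sin (π / k) ≤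
          |Real.sin (π * ((b:ℝ) - (a:ℝ)) / k)| := by
        intro a b hab hbk
        have hba1 : (1:ℝ) ≤ (b:ℝ) - (a:ℝ) := by
          have : (a:ℝ) + 1 ≤ (b:ℝ) := by exact_mod_cast hab
          linarith
        have hbak : (b:ℝ) - (a:ℝ) ≤ (k:ℝ) - 1 := by
          have : (b:ℝ) + 1 ≤ (k:ℝ) := by exact_mod_cast hbk
          have : (0:ℝ) ≤ (a:ℝ) := by positivity
          linarith
        have hlow : π / k ≤ π * ((b:ℝ) - (a:ℝ)) / k := by
          rw [div_le_div_iff₀ hkpos hkpos]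
          nlinarith [mul_nonneg (mul_pos hπ hkpos).le (sub_nonneg.2 hba1)]
        have hhigh : π * ((b:ℝ) - (a:ℝ)) / k ≤ π - π / k := by
          have heq : π - π / k = π * ((k:ℝ) - 1) / k := by field_simp
          rw [heq, div_le_div_iff₀ hkpos hkpos]
          nlinarith [mul_nonneg (mul_pos hπ hkpos).le (sub_nonneg.2 hbak)]
        have hnn : 0 ≤ Real.sin (π * ((b:ℝ) - (a:ℝ)) / k) := by
          apply Real.sin_nonneg_of_nonneg_of_le_pi
          · positivity
          · have : 0 ≤ π / k := by positivity
            linarith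
        rw [abs_of_nonneg hnn]
        apply sin_min_lemma (by positivity) ?_ hlow hhigh
        rw [div_le_div_iff₀ hkpos (by norm_num : (0:ℝ) < 2)]
        nlinarith [mul_nonneg hπ.le (sub_nonneg.2 h2k)]
      have hbound : Real.sin (π / k) ≤ |Real.sin (π * ((j:ℝ) - (i:ℝ)) / k)| := by
        rcases Nat.lt_or_ge (i:ℕ) (j:ℕ) with h | h
        · exact main i j h j.isLt
        · have h' : (j:ℕ) < (i:ℕ) := by omega
          have := main j i h' i.isLt
          rw [show π * ((j:ℝ) - (i:ℝ)) / k = -(π * ((i:ℝ) - (j:ℝ)) / k) by ring,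
            Real.sin_neg, abs_neg]
          exact this
      have hpos : 0 < Real.sin (π / k) := by
        apply Real.sin_pos_of_pos_of_lt_pi (by positivity)
        rw [div_lt_iff₀ hkpos]
        nlinarith [mul_pos hπ (by linarith : (0:ℝ) < (k:ℝ) - 1)]
      show max 0 (1 - |Real.sin (θ i x)| / Real.sin (π / k)) = 0
      apply max_eq_left
      have hq : 1 ≤ |Real.sin (θ i x)| / Real.sin (π / k) := by
        rw [one_le_div hpos, habs]
        exact hbound
      linarith
end

section
/- Let p be a prime, let k ≥ 1 be an integer, let U ⊆ ℚ_p be open and let p₀ ∈ U. Then there exist continuous functions s₁, …, s_k : U → ℚ_p and continuous bounded functions δ₁, …, δ_k : U ∖ {p₀} → ℚ_p such that, setting Sᵢ = {x ∈ U : sᵢ(x) = 0} ∖ {p₀}: (1) the sets S₁, …, S_k are pairwise disjoint; (2) for each i, sᵢ(p₀) = 0 and p₀ lies in the closure of Sᵢ (i.e. p₀ is a non-isolated zero of sᵢ); (3) for each i, δᵢ = 1 on Sᵢ and δᵢ = 0 on S_j for every j ≠ i. -/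
open scoped Classical

lemma padic_norm_eq_of_close {p : ℕ} [Fact p.Prime] {x y p₀ : ℚ_[p]}
    (h : ‖y - x‖ < ‖x - p₀‖) : ‖y - p₀‖ = ‖x - p₀‖ := by
  have : y - p₀ = (y - x) + (x - p₀) := by ring
  rw [this, Padic.add_eq_max_of_ne (ne_of_lt h), max_eq_right (le_of_lt h)]

theorem stmt_18 (p : ℕ) [Fact p.Prime] (k : ℕ) (hk : 1 ≤ k)
    (U : Set ℚ_[p]) (hU : IsOpen U) (p₀ : ℚ_[p]) (hp₀ : p₀ ∈ U) :
    ∃ s δ : Fin k → (ℚ_[p] → ℚ_[p]),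
      (∀ i, ContinuousOn (s i) U) ∧
      (∀ i, ContinuousOn (δ i) (U \ {p₀})) ∧
      (∀ i, ∃ M : ℝ, ∀ x ∈ U \ {p₀}, ‖δ i x‖ ≤ M) ∧
      (∀ i j, i ≠ j →
        ({x | x ∈ U ∧ s i x = 0} \ {p₀}) ∩ ({x | x ∈ U ∧ s j x = 0} \ {p₀}) = ∅) ∧
      (∀ i, s i p₀ = 0 ∧ p₀ ∈ closure ({x | x ∈ U ∧ s i x = 0} \ {p₀})) ∧
      (∀ i, (∀ x ∈ ({x | x ∈ U ∧ s i x = 0} \ {p₀}), δ i x = 1) ∧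
        ∀ j, j ≠ i → ∀ x ∈ ({x | x ∈ U ∧ s j x = 0} \ {p₀}), δ i x = 0) := by
  classical
  have hp1 : (1:ℝ) < p := by exact_mod_cast (Fact.out : p.Prime).one_lt
  have hp0 : (0:ℝ) < p := lt_trans one_pos hp1
  have hpinv : (p:ℝ)⁻¹ < 1 := inv_lt_one_of_one_lt₀ hp1
  have hpinv0 : (0:ℝ) ≤ (p:ℝ)⁻¹ := inv_nonneg.mpr hp0.le
  obtain ⟨ε, hε, hball⟩ := Metric.isOpen_iff.mp hU p₀ hp₀
  obtain ⟨N, hN⟩ : ∃ N : ℕ, ((p:ℝ)⁻¹) ^ N < ε := exists_pow_lt_of_lt_one hε hpinv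
  have hconv : ∀ n : ℕ, (p:ℝ) ^ (-(n:ℤ)) = ((p:ℝ)⁻¹) ^ n := by
    intro n; rw [zpow_neg, zpow_natCast, inv_pow]
  -- the predicate
  set Q : Fin k → ℚ_[p] → Prop :=
    fun i x => ∃ n : ℕ, N ≤ n ∧ n % k = i.val ∧ ‖x - p₀‖ = (p:ℝ) ^ (-(n:ℤ)) with hQ
  set s : Fin k → ℚ_[p] → ℚ_[p] :=
    fun i x => if x = p₀ ∨ Q i x then 0 else x - p₀ with hs
  set δ : Fin k → ℚ_[p] → ℚ_[p] := fun i x => if Q i x then 1 else 0 with hδ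
  -- injectivity of exponents
  have hinj : ∀ m n : ℕ, (p:ℝ) ^ (-(m:ℤ)) = (p:ℝ) ^ (-(n:ℤ)) → m = n := by
    intro m n h
    have := zpow_right_injective₀ hp0 (ne_of_gt hp1) h
    omega
  -- local constancy of Q away from p₀
  have hQloc : ∀ i (x y : ℚ_[p]), ‖y - x‖ < ‖x - p₀‖ → (Q i y ↔ Q i x) := by
    intro i x y h
    have := padic_norm_eq_of_close h
    simp only [hQ, this]
  -- zero sets
  have hzero : ∀ i x, x ≠ p₀ → (s i x = 0 ↔ Q i x) := by
    intro i x hx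
    constructor
    · intro h
      by_contra hq
      have hcond : ¬ (x = p₀ ∨ Q i x) := fun h => h.elim hx hq
      simp only [hs] at h
      rw [if_neg hcond] at h
      exact hx (sub_eq_zero.mp h)
    · intro hq; simp [hs, hq]
  -- continuity of s
  have hscont : ∀ i, Continuous (s i) := by
    intro i
    rw [continuous_iff_continuousAt]
    intro x
    by_cases hx : x = p₀
    · subst hx
      have h0 : s i x = 0 := by simp [hs]
      rw [ContinuousAt, h0]
      apply squeeze_zero_norm (a := fun y => ‖y - x‖)
      · intro y
        by_cases h : y = x ∨ Q i y <;> simp [hs, h]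
      · exact tendsto_norm_sub_self x
    · have hpos : 0 < ‖x - p₀‖ := by simpa [sub_eq_zero] using hx
      have hev : s i =ᶠ[nhds x] (fun y => if x = p₀ ∨ Q i x then 0 else y - p₀) := by
        filter_upwards [Metric.ball_mem_nhds x hpos] with y hy
        have hy' : ‖y - x‖ < ‖x - p₀‖ := by simpa [dist_eq_norm] using hy
        have hne : y ≠ p₀ := by
          intro h
          subst h
          simp [norm_sub_rev] at hy'
        have : (y = p₀ ∨ Q i y) ↔ (x = p₀ ∨ Q i x) := by
          simp [hne, hx, hQloc i x y hy']
        simp only [hs]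
        rw [if_congr this rfl rfl]
      refine ContinuousAt.congr ?_ hev.symm
      by_cases h : x = p₀ ∨ Q i x <;> simp [h] <;> fun_prop
  -- continuity of δ
  have hδcont : ∀ i, ContinuousOn (δ i) (U \ {p₀}) := by
    intro i x hx
    have hx' : x ≠ p₀ := hx.2
    have hpos : 0 < ‖x - p₀‖ := by simpa [sub_eq_zero] using hx'
    apply ContinuousAt.continuousWithinAt
    have hev : δ i =ᶠ[nhds x] (fun _ => if Q i x then 1 else 0) := by
      filter_upwards [Metric.ball_mem_nhds x hpos] with y hy
      have hy' : ‖y - x‖ < ‖x - p₀‖ := by simpa [dist_eq_norm] using hy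
      simp only [hδ]
      rw [if_congr (hQloc i x y hy') rfl rfl]
    exact ContinuousAt.congr continuousAt_const hev.symm
  refine ⟨s, δ, fun i => (hscont i).continuousOn, hδcont, ?_, ?_, ?_, ?_⟩
  · intro i
    refine ⟨1, fun x _ => ?_⟩
    by_cases h : Q i x <;> simp [hδ, h]
  · intro i j hij
    ext x
    simp only [Set.mem_inter_iff, Set.mem_diff, Set.mem_setOf_eq, Set.mem_singleton_iff,
      Set.mem_empty_iff_false, iff_false]
    rintro ⟨⟨⟨-, hsi⟩, hxne⟩, ⟨-, hsj⟩, -⟩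
    obtain ⟨n, -, hni, hnrm⟩ := (hzero i x hxne).mp hsi
    obtain ⟨m, -, hmj, hnrm'⟩ := (hzero j x hxne).mp hsj
    have hnm : n = m := hinj n m (by rw [← hnrm, ← hnrm'])
    exact hij (Fin.ext (by rw [← hni, ← hmj, hnm]))
  · intro i
    refine ⟨by simp [hs], ?_⟩
    rw [Metric.mem_closure_iff]
    intro ε' hε'
    obtain ⟨M, hM⟩ : ∃ M : ℕ, ((p:ℝ)⁻¹) ^ M < min ε ε' := exists_pow_lt_of_lt_one (lt_min hε hε') hpinv
    set n : ℕ := i.val + k * (M + N) with hn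
    have hkey : M + N ≤ k * (M + N) := Nat.le_mul_of_pos_left _ hk
    have hnN : N ≤ n := by omega
    have hnM : M ≤ n := by omega
    have hmod : n % k = i.val := by
      rw [hn, Nat.add_mul_mod_self_left, Nat.mod_eq_of_lt i.isLt]
    have hplt : ((p:ℝ)⁻¹) ^ n < min ε ε' := lt_of_le_of_lt (pow_le_pow_of_le_one hpinv0 hpinv.le hnM) hM
    refine ⟨p₀ + (p:ℚ_[p]) ^ n, ?_, ?_⟩
    · have hnrm : ‖(p₀ + (p:ℚ_[p]) ^ n) - p₀‖ = (p:ℝ) ^ (-(n:ℤ)) := by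
        simp [Padic.norm_p_pow]
      have hne : p₀ + (p:ℚ_[p]) ^ n ≠ p₀ := by
        intro h
        have : ((p:ℚ_[p]) ^ n) = 0 := by linear_combination h
        exact (pow_ne_zero n (Nat.cast_ne_zero.mpr (Fact.out : p.Prime).ne_zero)) this
      refine ⟨⟨?_, ?_⟩, hne⟩
      · apply hball
        rw [Metric.mem_ball, dist_eq_norm, hnrm, hconv]
        exact lt_of_lt_of_le hplt (min_le_left _ _)
      · exact (hzero i _ hne).mpr ⟨n, hnN, hmod, hnrm⟩
    · rw [dist_comm, dist_eq_norm]
      simp only [add_sub_cancel_left, Padic.norm_p_pow, hconv]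
      exact lt_of_lt_of_le hplt (min_le_right _ _)
  · intro i
    constructor
    · rintro x ⟨⟨-, hsx⟩, hxne⟩
      simp only [Set.mem_singleton_iff] at hxne
      have := (hzero i x hxne).mp hsx
      simp [hδ, this]
    · rintro j hij x ⟨⟨-, hsx⟩, hxne⟩
      simp only [Set.mem_singleton_iff] at hxne
      obtain ⟨m, -, hmj, hnrm'⟩ := (hzero j x hxne).mp hsx
      have : ¬ Q i x := by
        rintro ⟨n, -, hni, hnrm⟩
        have hnm : n = m := hinj n m (by rw [← hnrm, ← hnrm'])
        exact hij (Fin.ext (by rw [← hni, ← hmj, hnm]))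
      simp [hδ, this]
end
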